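/- arXiv:1311.4635 — 6 statements merged into one kernel-verified Lean document; each statement's English description precedes it below -/
import Mathlib

section
/- Let $\{z_n\}$ and $\{M_n\}$ be sequences of nonnegative reals with $M_n \le M_{n-1}$ for all $n \ge 1$. Suppose there exist constants $0<\theta<1$, $0<\beta<1$, $A \ge C > 0$, and a positive integer $T$ such that for all $n\ge 1$: (1) if $z_n \ge A M_{n-1}$ then $z_{n+1} \le \theta z_n$; (2) if $z_n < A M_{n-1}$ then $M_{n+T} \le \beta M_{n-1}$; (3) $z_{n+1} \le \theta \max\{z_n, C M_{n-1}\}$. Then there exist constants $c>0$ and $0<\mu<1$ such that $z_n + M_n \le c\,\mu^n$ for all $n$. -/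
/-- Abstract iteration lemma: exponential decay of `z n + M n`. -/
theorem stmt_0 (z M : ℕ → ℝ) (hz : ∀ n, 0 ≤ z n) (hM : ∀ n, 0 ≤ M n)
    (hmono : ∀ n, 1 ≤ n → M n ≤ M (n - 1))
    (θ β A C : ℝ) (T : ℕ)
    (hθ0 : 0 < θ) (hθ1 : θ < 1) (hβ0 : 0 < β) (hβ1 : β < 1)
    (hC : 0 < C) (hCA : C ≤ A) (hT : 0 < T)
    (h1 : ∀ n, 1 ≤ n → A * M (n - 1) ≤ z n → z (n + 1) ≤ θ * z n)
    (h2 : ∀ n, 1 ≤ n → z n < A * M (n - 1) → M (n + T) ≤ β * M (n - 1))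
    (h3 : ∀ n, 1 ≤ n → z (n + 1) ≤ θ * max (z n) (C * M (n - 1))) :
    ∃ c > 0, ∃ μ : ℝ, 0 < μ ∧ μ < 1 ∧ ∀ n, z n + M n ≤ c * μ ^ n := by
  have hA : 0 < A := lt_of_lt_of_le hC hCA
  -- shifted hypotheses
  have hmono' : ∀ m : ℕ, M (m + 1) ≤ M m := fun m => by simpa using hmono (m + 1) (by omega)
  have hMa : Antitone M := antitone_nat_of_succ_le hmono'
  have h1' : ∀ m : ℕ, A * M m ≤ z (m + 1) → z (m + 2) ≤ θ * z (m + 1) := fun m h => by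
    simpa using h1 (m + 1) (by omega) (by simpa using h)
  have h2' : ∀ m : ℕ, z (m + 1) < A * M m → M (m + 1 + T) ≤ β * M m := fun m h => by
    simpa using h2 (m + 1) (by omega) (by simpa using h)
  have h3' : ∀ m : ℕ, z (m + 2) ≤ θ * max (z (m + 1)) (C * M m) := fun m => by
    simpa using h3 (m + 1) (by omega)
  set γ : ℝ := max θ β with hγdef
  have hγ0 : 0 < γ := lt_max_of_lt_left hθ0
  have hγ1 : γ < 1 := max_lt hθ1 hβ1
  have hθγ : θ ≤ γ := le_max_left _ _
  have hβγ : β ≤ γ := le_max_right _ _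
  set V : ℕ → ℝ := fun m => max (z (m + 1)) (C * M m) with hVdef
  have hV0 : ∀ m, 0 ≤ V m := fun m => le_max_of_le_left (hz _)
  have hzVmem : ∀ m, z (m + 1) ≤ V m := fun m => le_max_left _ _
  have hCMV : ∀ m, C * M m ≤ V m := fun m => le_max_right _ _
  have hzV : ∀ m, z (m + 2) ≤ θ * V m := fun m => h3' m
  -- z stays below θ * V m forever
  have hzj : ∀ m j : ℕ, z (m + 2 + j) ≤ θ * V m := by
    intro m j
    induction j with
    | zero => simpa using hzV m
    | succ j ih =>
      rw [show m + 2 + (j + 1) = (m + 1 + j) + 2 by omega]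
      calc z ((m + 1 + j) + 2) ≤ θ * max (z (m + 1 + j + 1)) (C * M (m + 1 + j)) := h3' _
        _ ≤ θ * V m := by
            apply mul_le_mul_of_nonneg_left _ hθ0.le
            apply max_le
            · have : z (m + 1 + j + 1) ≤ θ * V m := by
                rw [show m + 1 + j + 1 = m + 2 + j by omega]; exact ih
              nlinarith [hV0 m]
            · calc C * M (m + 1 + j) ≤ C * M m :=
                    mul_le_mul_of_nonneg_left (hMa (by omega)) hC.le
                _ ≤ V m := hCMV m
  set K : ℕ := 2 * T + 1 with hKdef
  have hK : 0 < K := by omega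
  -- one-block decay
  have hVK : ∀ m, V (m + K) ≤ γ * V m := by
    intro m
    apply max_le
    · -- z part
      have : z (m + K + 1) ≤ θ * V m := by
        rw [show m + K + 1 = m + 2 + 2 * T by omega]; exact hzj m (2 * T)
      calc z (m + K + 1) ≤ θ * V m := this
        _ ≤ γ * V m := mul_le_mul_of_nonneg_right hθγ (hV0 m)
    · -- M part
      by_cases hcase : ∃ k ≤ T, z (m + 1 + k) < A * M (m + k)
      · obtain ⟨k, hk, hlt⟩ := hcase
        have hstep : M (m + k + 1 + T) ≤ β * M (m + k) := by
          have := h2' (m + k) (by rw [show m + k + 1 = m + 1 + k by omega]; exact hlt)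
          exact this
        calc C * M (m + K) ≤ C * M (m + k + 1 + T) :=
              mul_le_mul_of_nonneg_left (hMa (by omega)) hC.le
          _ ≤ C * (β * M (m + k)) := mul_le_mul_of_nonneg_left hstep hC.le
          _ ≤ C * (β * M m) :=
              mul_le_mul_of_nonneg_left
                (mul_le_mul_of_nonneg_left (hMa (show m ≤ m + k by omega)) hβ0.le) hC.le
          _ = β * (C * M m) := by ring
          _ ≤ β * V m := mul_le_mul_of_nonneg_left (hCMV m) hβ0.le
          _ ≤ γ * V m := mul_le_mul_of_nonneg_right hβγ (hV0 m)
      · push_neg at hcase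
        -- z decays geometrically on the block
        have zdec : ∀ k, k ≤ T → z (m + 1 + k) ≤ θ ^ k * z (m + 1) := by
          intro k hkT
          induction k with
          | zero => simp
          | succ k ih =>
            have ih' := ih (by omega)
            have hge : A * M (m + k) ≤ z (m + k + 1) := by
              have := hcase k (by omega)
              rw [show m + k + 1 = m + 1 + k by omega]; exact this
            have := h1' (m + k) hge
            calc z (m + 1 + (k + 1)) = z (m + k + 2) := by ring_nf
              _ ≤ θ * z (m + k + 1) := this
              _ = θ * z (m + 1 + k) := by ring_nf
              _ ≤ θ * (θ ^ k * z (m + 1)) := mul_le_mul_of_nonneg_left ih' hθ0.le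
              _ = θ ^ (k + 1) * z (m + 1) := by ring
        have hAM : A * M (m + T) ≤ z (m + 1 + T) := hcase T le_rfl
        have hθT : θ ^ T ≤ θ := by
          calc θ ^ T ≤ θ ^ 1 := pow_le_pow_of_le_one hθ0.le hθ1.le hT
            _ = θ := pow_one θ
        calc C * M (m + K) ≤ C * M (m + T) :=
              mul_le_mul_of_nonneg_left (hMa (by omega)) hC.le
          _ ≤ A * M (m + T) := mul_le_mul_of_nonneg_right hCA (hM _)
          _ ≤ z (m + 1 + T) := hAM
          _ ≤ θ ^ T * z (m + 1) := zdec T le_rfl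
          _ ≤ θ * z (m + 1) := mul_le_mul_of_nonneg_right hθT (hz _)
          _ ≤ θ * V m := mul_le_mul_of_nonneg_left (hzVmem m) hθ0.le
          _ ≤ γ * V m := mul_le_mul_of_nonneg_right hθγ (hV0 m)
  -- V is non-increasing
  have hVdec : ∀ m, V (m + 1) ≤ V m := by
    intro m
    apply max_le
    · have := hzV m
      nlinarith [hV0 m]
    · calc C * M (m + 1) ≤ C * M m := mul_le_mul_of_nonneg_left (hmono' m) hC.le
        _ ≤ V m := hCMV m
  have hVa : Antitone V := antitone_nat_of_succ_le hVdec
  -- iterated block decay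
  have hVjK : ∀ j : ℕ, V (j * K) ≤ γ ^ j * V 0 := by
    intro j
    induction j with
    | zero => simp
    | succ j ih =>
      calc V ((j + 1) * K) = V (j * K + K) := by ring_nf
        _ ≤ γ * V (j * K) := hVK _
        _ ≤ γ * (γ ^ j * V 0) := mul_le_mul_of_nonneg_left ih hγ0.le
        _ = γ ^ (j + 1) * V 0 := by ring
  -- choose μ and c
  set μ : ℝ := γ ^ ((K : ℝ)⁻¹) with hμdef
  have hKR : (0 : ℝ) < (K : ℝ) := by exact_mod_cast hK
  have hμ0 : 0 < μ := Real.rpow_pos_of_pos hγ0 _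
  have hμ1 : μ < 1 := Real.rpow_lt_one hγ0.le hγ1 (by positivity)
  set c : ℝ := max (z 0 + M 0) ((1 + 1 / C) * γ ^ (-2 : ℝ) * V 0) + 1 with hcdef
  have hXnn : 0 ≤ max (z 0 + M 0) ((1 + 1 / C) * γ ^ (-2 : ℝ) * V 0) :=
    le_trans (add_nonneg (hz 0) (hM 0)) (le_max_left _ _)
  have hc0 : 0 < c := by rw [hcdef]; linarith
  have hzMc : z 0 + M 0 ≤ c := by
    rw [hcdef]
    have := le_max_left (z 0 + M 0) ((1 + 1 / C) * γ ^ (-2 : ℝ) * V 0)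
    linarith
  have hcle : (1 + 1 / C) * γ ^ (-2 : ℝ) * V 0 ≤ c := by
    rw [hcdef]
    have := le_max_right (z 0 + M 0) ((1 + 1 / C) * γ ^ (-2 : ℝ) * V 0)
    linarith
  refine ⟨c, hc0, μ, hμ0, hμ1, ?_⟩
  intro n
  rcases Nat.eq_zero_or_pos n with hn | hn
  · subst hn; simpa using hzMc
  · obtain ⟨m, rfl⟩ : ∃ m, n = m + 1 := ⟨n - 1, by omega⟩
    set j : ℕ := m / K with hjdef
    have hjm : j * K ≤ m := by
      rw [hjdef]; exact Nat.div_mul_le_self m K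
    have hVm : V m ≤ γ ^ j * V 0 := le_trans (hVa hjm) (hVjK j)
    -- z n + M n ≤ (1 + 1/C) * V m
    have hzn : z (m + 1) ≤ V m := hzVmem m
    have hMn : M (m + 1) ≤ (1 / C) * V m := by
      have h1m : M (m + 1) ≤ M m := hmono' m
      have h2m : C * M m ≤ V m := hCMV m
      rw [div_mul_eq_mul_div, le_div_iff₀ hC]
      nlinarith
    have hsum : z (m + 1) + M (m + 1) ≤ (1 + 1 / C) * V m := by
      have hCpos : 0 < 1 / C := by positivity
      nlinarith [hV0 m]
    -- rpow estimates
    have hnj : ((m + 1 : ℕ) : ℝ) / (K : ℝ) - 2 ≤ (j : ℝ) := by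
      have hmod : m % K < K := Nat.mod_lt _ hK
      have hdm : K * j + m % K = m := by rw [hjdef]; exact Nat.div_add_mod m K
      have hdmR : (K : ℝ) * (j : ℝ) + ((m % K : ℕ) : ℝ) = (m : ℝ) := by exact_mod_cast hdm
      have hmodR : ((m % K : ℕ) : ℝ) < (K : ℝ) := by exact_mod_cast hmod
      have hK1 : (1 : ℝ) ≤ (K : ℝ) := by exact_mod_cast hK
      rw [sub_le_iff_le_add, div_le_iff₀ hKR]
      have expand : ((j : ℝ) + 2) * (K : ℝ) = (K : ℝ) * (j : ℝ) + 2 * (K : ℝ) := by ring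
      rw [expand, Nat.cast_add, Nat.cast_one]
      linarith [hdmR, hmodR, hK1]
    have hpow : (γ : ℝ) ^ (j : ℕ) ≤ γ ^ (-2 : ℝ) * μ ^ (m + 1) := by
      have e1 : (γ : ℝ) ^ (j : ℕ) = γ ^ ((j : ℕ) : ℝ) := (Real.rpow_natCast γ j).symm
      have e2 : μ ^ (m + 1) = γ ^ ((K : ℝ)⁻¹ * ((m + 1 : ℕ) : ℝ)) := by
        rw [hμdef, ← Real.rpow_natCast (γ ^ ((K : ℝ)⁻¹)) (m + 1), ← Real.rpow_mul hγ0.le]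
      have e3 : γ ^ (-2 : ℝ) * γ ^ ((K : ℝ)⁻¹ * ((m + 1 : ℕ) : ℝ))
          = γ ^ ((-2 : ℝ) + (K : ℝ)⁻¹ * ((m + 1 : ℕ) : ℝ)) := (Real.rpow_add hγ0 _ _).symm
      rw [e1, e2, e3]
      apply Real.rpow_le_rpow_of_exponent_ge hγ0 hγ1.le
      rw [inv_mul_eq_div]
      linarith
    have hfac : 0 ≤ (1 + 1 / C) := by positivity
    have key : z (m + 1) + M (m + 1) ≤ (1 + 1 / C) * γ ^ (-2 : ℝ) * V 0 * μ ^ (m + 1) := by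
      calc z (m + 1) + M (m + 1) ≤ (1 + 1 / C) * V m := hsum
        _ ≤ (1 + 1 / C) * (γ ^ j * V 0) := mul_le_mul_of_nonneg_left hVm hfac
        _ ≤ (1 + 1 / C) * ((γ ^ (-2 : ℝ) * μ ^ (m + 1)) * V 0) := by
            apply mul_le_mul_of_nonneg_left _ hfac
            exact mul_le_mul_of_nonneg_right hpow (hV0 0)
        _ = (1 + 1 / C) * γ ^ (-2 : ℝ) * V 0 * μ ^ (m + 1) := by ring
    have hcle : (1 + 1 / C) * γ ^ (-2 : ℝ) * V 0 ≤ c := by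
      have := le_max_right (z 0 + M 0) ((1 + 1 / C) * γ ^ (-2 : ℝ) * V 0)
      linarith
    have hμn : 0 ≤ μ ^ (m + 1) := le_of_lt (pow_pos hμ0 _)
    calc z (m + 1) + M (m + 1) ≤ (1 + 1 / C) * γ ^ (-2 : ℝ) * V 0 * μ ^ (m + 1) := key
      _ ≤ c * μ ^ (m + 1) := mul_le_mul_of_nonneg_right hcle hμn
end

section
/- Let $v > 0$ be fixed. Then $\lim_{\epsilon \to 0^+} \frac{3^{1/2}}{2\pi^{1/2}} \int_0^{\epsilon} \frac{1}{s^{3/2}} \exp\left(-\frac{3|x_\epsilon - s v|^2}{4 s^3}\right) ds = \frac{1}{v}$, for any family $x_\epsilon > 0$ with $x_\epsilon/\epsilon \to 0$ as $\epsilon \to 0^+$. -/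
open Real Filter MeasureTheory Topology

noncomputable def fker (v x : ℝ) (s : ℝ) : ℝ :=
  (1 / s ^ ((3:ℝ)/2)) * Real.exp (-(3 * |x - s * v| ^ 2 / (4 * s ^ 3)))

noncomputable def uu (v x s : ℝ) : ℝ := (Real.sqrt 3 / 2) * ((s * v - x) * s ^ (-(3:ℝ)/2))

noncomputable def uu' (v x s : ℝ) : ℝ := (Real.sqrt 3 / 4) * ((3 * x - v * s) * s ^ (-(5:ℝ)/2))

lemma fker_nonneg (v x s : ℝ) (hs : 0 ≤ s) : 0 ≤ fker v x s := by
  unfold fker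
  apply mul_nonneg _ (Real.exp_pos _).le
  exact div_nonneg one_pos.le (Real.rpow_nonneg hs _)

lemma fker_zero (v x : ℝ) : fker v x 0 = 0 := by
  simp [fker, Real.zero_rpow (by norm_num : ((3:ℝ)/2) ≠ 0)]

lemma measurable_fker (v x : ℝ) : Measurable (fker v x) := by
  unfold fker
  fun_prop

lemma continuousOn_fker (v x : ℝ) : ContinuousOn (fker v x) {s : ℝ | 0 < s} := by
  unfold fker
  apply ContinuousOn.mul
  · apply ContinuousOn.div continuousOn_const
    · intro s hs
      exact (Real.continuousAt_rpow_const s _ (Or.inl (ne_of_gt hs))).continuousWithinAt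
    · intro s hs
      have : (0:ℝ) < s := hs
      positivity
  · apply Real.continuous_exp.comp_continuousOn
    apply ContinuousOn.neg
    apply ContinuousOn.div
    · fun_prop
    · fun_prop
    · intro s hs
      have : (0:ℝ) < s := hs
      positivity

lemma hasDerivAt_uu (v x s : ℝ) (hs : 0 < s) : HasDerivAt (uu v x) (uu' v x s) s := by
  have h1 : HasDerivAt (fun s : ℝ => s * v - x) v s := by
    simpa using ((hasDerivAt_id s).mul_const v).sub_const x
  have h2 : HasDerivAt (fun s : ℝ => s ^ (-(3:ℝ)/2)) ((-(3:ℝ)/2) * s ^ ((-(3:ℝ)/2) - 1)) s :=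
    Real.hasDerivAt_rpow_const (Or.inl hs.ne')
  have h3 := (h1.mul h2).const_mul (Real.sqrt 3 / 2)
  have e2 : s ^ (-(3:ℝ)/2) = s * s ^ (-(5:ℝ)/2) := by
    rw [show (-(3:ℝ)/2) = 1 + (-(5:ℝ)/2) by norm_num, Real.rpow_add hs, Real.rpow_one]
  refine h3.congr_deriv ?_
  rw [uu', show ((-(3:ℝ)/2) - 1) = -(5:ℝ)/2 by norm_num, e2]
  ring

lemma sq_uu (v x s : ℝ) (hs : 0 < s) :
    (uu v x s)^2 = 3 * |x - s * v| ^ 2 / (4 * s ^ 3) := by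
  have h1 : s ^ (-(3:ℝ)/2) * s ^ (-(3:ℝ)/2) = (s^3)⁻¹ := by
    rw [← Real.rpow_add hs, show (-(3:ℝ)/2 + -(3:ℝ)/2) = -(3:ℝ) by norm_num,
      Real.rpow_neg hs.le, show ((3:ℝ):ℝ) = ((3:ℕ):ℝ) by norm_num, Real.rpow_natCast]
  have h2 : Real.sqrt 3 * Real.sqrt 3 = 3 := Real.mul_self_sqrt (by norm_num)
  have h3 : |x - s*v|^2 = (s*v - x)^2 := by
    rw [sq_abs]; ring
  have hs3 : (s:ℝ)^3 ≠ 0 := by positivity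
  unfold uu
  rw [h3, mul_pow, mul_pow, div_pow, Real.sq_sqrt (by norm_num : (0:ℝ) ≤ 3),
    pow_two (s ^ (-(3:ℝ)/2)), h1]
  field_simp
  ring_nf

lemma exp_neg_le (y : ℝ) (hy : 0 < y) : Real.exp (-y) ≤ 4 / y^2 := by
  have h := Real.add_one_le_exp (y/2)
  have e : Real.exp y = Real.exp (y/2) * Real.exp (y/2) := by
    rw [← Real.exp_add]; ring_nf
  have h2 : y^2/4 ≤ Real.exp y := by nlinarith [Real.exp_pos (y/2)]
  have h3 : (Real.exp y)⁻¹ ≤ (y^2/4)⁻¹ := inv_anti₀ (by positivity) h2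
  rw [Real.exp_neg]
  calc (Real.exp y)⁻¹ ≤ (y^2/4)⁻¹ := h3
    _ = 4/y^2 := by rw [inv_div]

lemma fker_le_of_exponent (v x m s : ℝ) (hm : 0 < m) (hs : 0 < s)
    (h : m / s ≤ 3 * |x - s*v|^2/(4*s^3)) :
    fker v x s ≤ 4 * Real.sqrt s / m^2 := by
  unfold fker
  have hpow : (0:ℝ) < s ^ ((3:ℝ)/2) := Real.rpow_pos_of_pos hs _
  have h1 : Real.exp (-(3 * |x - s*v|^2/(4*s^3))) ≤ Real.exp (-(m/s)) :=
    Real.exp_le_exp.2 (by linarith)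
  have h2 : Real.exp (-(m/s)) ≤ 4 / (m/s)^2 := exp_neg_le _ (by positivity)
  have h3 : (1 / s ^ ((3:ℝ)/2)) * (4 / (m/s)^2) = 4 * Real.sqrt s / m^2 := by
    have e1 : (1 / s ^ ((3:ℝ)/2)) = s ^ (-(3:ℝ)/2) := by
      rw [one_div, ← Real.rpow_neg hs.le]; norm_num
    have e2 : s ^ (2:ℕ) * s ^ (-(3:ℝ)/2) = Real.sqrt s := by
      rw [Real.sqrt_eq_rpow, ← Real.rpow_natCast s 2, ← Real.rpow_add hs]; norm_num
    rw [e1, div_pow, div_div_eq_mul_div, ← e2]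
    field_simp
  calc (1 / s ^ ((3:ℝ)/2)) * Real.exp (-(3 * |x - s*v|^2/(4*s^3)))
      ≤ (1 / s ^ ((3:ℝ)/2)) * (4 / (m/s)^2) := by
        apply mul_le_mul_of_nonneg_left (h1.trans h2) (by positivity)
    _ = 4 * Real.sqrt s / m^2 := h3

lemma rpow_ratio (v x η s : ℝ) (hv : 0 < v) (hx : 0 < x) (hη : 0 < η) (hη2 : η ≤ 1/2)
    (hs1 : (1-η)*x/v ≤ s) (hs2 : s ≤ (1+η)*x/v) :
    ((4*(1-η)/(Real.sqrt 3 * (v*(2+η)))) * uu' v x s ≤ 1 / s ^ ((3:ℝ)/2) ∧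
     1 / s ^ ((3:ℝ)/2) ≤ (4*(1+η)/(Real.sqrt 3 * (v*(2-η)))) * uu' v x s) := by
  have hη3 : (0:ℝ) < 1 - η := by linarith
  have hη4 : (0:ℝ) < 2 + η := by linarith
  have hη5 : (0:ℝ) < 2 - η := by linarith
  have hs : 0 < s := lt_of_lt_of_le (div_pos (mul_pos hη3 hx) hv) hs1
  have h5 : (0:ℝ) < s ^ ((5:ℝ)/2) := Real.rpow_pos_of_pos hs _
  have e1 : s ^ (-(5:ℝ)/2) = (s ^ ((5:ℝ)/2))⁻¹ := by
    rw [← Real.rpow_neg hs.le]; norm_num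
  have e2 : 1 / s ^ ((3:ℝ)/2) = s * (s ^ ((5:ℝ)/2))⁻¹ := by
    rw [← e1, show s * s ^ (-(5:ℝ)/2) = s ^ (1:ℝ) * s ^ (-(5:ℝ)/2) by rw [Real.rpow_one],
      ← Real.rpow_add hs, one_div, ← Real.rpow_neg hs.le]
    norm_num
  have hsq3 : Real.sqrt 3 * Real.sqrt 3 = 3 := Real.mul_self_sqrt (by norm_num)
  have h3pos : (0:ℝ) < Real.sqrt 3 := Real.sqrt_pos.2 (by norm_num)
  have hb1 : (1-η)*x ≤ s*v := by
    rw [div_le_iff₀ hv] at hs1; linarith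
  have hb2 : s*v ≤ (1+η)*x := by
    rw [le_div_iff₀ hv] at hs2; linarith
  have hinv : (0:ℝ) ≤ (s ^ ((5:ℝ)/2))⁻¹ := (inv_pos.2 h5).le
  have hcm : 4*(1-η)/(Real.sqrt 3*(v*(2+η))) * (Real.sqrt 3/4) = (1-η)/(v*(2+η)) := by
    field_simp
  have hcp : 4*(1+η)/(Real.sqrt 3*(v*(2-η))) * (Real.sqrt 3/4) = (1+η)/(v*(2-η)) := by
    field_simp
  constructor
  · have goal' : (1-η)/(v*(2+η)) * (3*x - v*s) ≤ s := by
      rw [div_mul_eq_mul_div, div_le_iff₀ (by positivity)]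
      nlinarith [hb1]
    have h := mul_le_mul_of_nonneg_right goal' hinv
    unfold uu'
    rw [e1, e2]
    have eL : (4*(1-η)/(Real.sqrt 3*(v*(2+η)))) * (Real.sqrt 3/4 * ((3*x - v*s) * (s ^ ((5:ℝ)/2))⁻¹))
        = (1-η)/(v*(2+η)) * (3*x - v*s) * (s ^ ((5:ℝ)/2))⁻¹ := by
      rw [← hcm]; ring
    rw [eL]
    linarith [h]
  · have goal' : s ≤ (1+η)/(v*(2-η)) * (3*x - v*s) := by
      rw [div_mul_eq_mul_div, le_div_iff₀ (by positivity)]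
      nlinarith [hb2]
    have h := mul_le_mul_of_nonneg_right goal' hinv
    unfold uu'
    rw [e1, e2]
    have eL : (4*(1+η)/(Real.sqrt 3*(v*(2-η)))) * (Real.sqrt 3/4 * ((3*x - v*s) * (s ^ ((5:ℝ)/2))⁻¹))
        = (1+η)/(v*(2-η)) * (3*x - v*s) * (s ^ ((5:ℝ)/2))⁻¹ := by
      rw [← hcp]; ring
    rw [eL]
    linarith [h]

lemma continuousOn_uu' (v x : ℝ) : ContinuousOn (uu' v x) {s : ℝ | 0 < s} := by
  unfold uu'
  apply ContinuousOn.mul continuousOn_const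
  apply ContinuousOn.mul (by fun_prop)
  intro s hs
  exact (Real.continuousAt_rpow_const s _ (Or.inl (ne_of_gt (by exact hs)))).continuousWithinAt

lemma subst_eq (v x a b : ℝ) (ha : 0 < a) (hab : a ≤ b) :
    ∫ s in a..b, uu' v x s * Real.exp (-(uu v x s)^2)
      = ∫ t in (uu v x a)..(uu v x b), Real.exp (-t^2) := by
  have huIcc : Set.uIcc a b = Set.Icc a b := Set.uIcc_of_le hab
  have hsub : Set.uIcc a b ⊆ {s : ℝ | 0 < s} := by
    rw [huIcc]; intro s hs; exact lt_of_lt_of_le ha hs.1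
  have h := intervalIntegral.integral_comp_smul_deriv
    (f := uu v x) (f' := uu' v x) (g := fun t => Real.exp (-t^2)) (a := a) (b := b)
    (fun s hs => hasDerivAt_uu v x s (hsub hs))
    ((continuousOn_uu' v x).mono hsub)
    (by fun_prop)
  simpa [Function.comp, smul_eq_mul] using h

lemma uu_scaled (v x c : ℝ) (hv : 0 < v) (hx : 0 < x) (hc : 0 < c) :
    uu v x (c*x/v) = ((Real.sqrt 3/2) * (c - 1) * (c/v) ^ (-(3:ℝ)/2)) * (Real.sqrt x)⁻¹ := by
  have h1 : c*x/v = (c/v)*x := by ring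
  have h2 : ((c/v)*x) ^ (-(3:ℝ)/2) = (c/v) ^ (-(3:ℝ)/2) * x ^ (-(3:ℝ)/2) :=
    Real.mul_rpow (by positivity) hx.le
  have h3 : x * x ^ (-(3:ℝ)/2) = (Real.sqrt x)⁻¹ := by
    rw [Real.sqrt_eq_rpow, ← Real.rpow_neg hx.le,
      show x * x ^ (-(3:ℝ)/2) = x ^ (1:ℝ) * x ^ (-(3:ℝ)/2) by rw [Real.rpow_one],
      ← Real.rpow_add hx]
    norm_num
  have h4 : (c/v)*x*v - x = (c-1)*x := by field_simp
  unfold uu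
  rw [h1, h2, h4, ← h3]
  ring

lemma continuousOn_uu (v x : ℝ) : ContinuousOn (uu v x) {s : ℝ | 0 < s} := by
  unfold uu
  apply ContinuousOn.mul continuousOn_const
  apply ContinuousOn.mul (by fun_prop)
  intro s hs
  exact (Real.continuousAt_rpow_const s _ (Or.inl (ne_of_gt (by exact hs)))).continuousWithinAt

set_option maxHeartbeats 1000000 in

lemma main_bounds (v x ε η : ℝ) (hv : 0 < v) (hx : 0 < x) (hη : 0 < η) (hη2 : η ≤ 1/2)
    (hbe : (1+η)*x/v ≤ ε) :
    (4*(1-η)/(Real.sqrt 3 * (v*(2+η)))) *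
        (∫ t in (uu v x ((1-η)*x/v))..(uu v x ((1+η)*x/v)), Real.exp (-t^2))
      ≤ (∫ s in (0:ℝ)..ε, fker v x s)
    ∧ (∫ s in (0:ℝ)..ε, fker v x s)
      ≤ (4*(1+η)/(Real.sqrt 3 * (v*(2-η)))) *
          (∫ t in (uu v x ((1-η)*x/v))..(uu v x ((1+η)*x/v)), Real.exp (-t^2))
        + (4/(3*η^2*v^2/(4*(1-η)^2))^2 + 4/(3*η^2*v^2/(4*(1+η)^2))^2) * (Real.sqrt ε * ε) := by
  have hη3 : (0:ℝ) < 1 - η := by linarith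
  have hη4 : (0:ℝ) < 2 + η := by linarith
  have hη5 : (0:ℝ) < 2 - η := by linarith
  have hη6 : (0:ℝ) < 1 + η := by linarith
  set a := (1-η)*x/v with ha_def
  set b := (1+η)*x/v with hb_def
  set M := 3*η^2*v^2/(4*(1-η)^2) with hM_def
  set M' := 3*η^2*v^2/(4*(1+η)^2) with hM'_def
  have ha : 0 < a := div_pos (mul_pos hη3 hx) hv
  have hb : 0 < b := div_pos (mul_pos hη6 hx) hv
  have hab : a ≤ b := by
    rw [ha_def, hb_def]
    rw [div_le_div_iff_of_pos_right hv]
    nlinarith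
  have hε : 0 < ε := lt_of_lt_of_le hb hbe
  have hM : 0 < M := div_pos (by positivity) (by positivity)
  have hM' : 0 < M' := div_pos (by positivity) (by positivity)
  -- exponent bounds on lower tail
  have hlow : ∀ s ∈ Set.Ioc (0:ℝ) a, M/s ≤ 3*|x - s*v|^2/(4*s^3) := by
    intro s hs
    obtain ⟨hs0, hsa⟩ := hs
    have h2 : v*s ≤ (1-η)*x := by
      rw [ha_def, le_div_iff₀ hv] at hsa
      linarith
    have h1 : η*x ≤ |x - s*v| := by
      have : η*x ≤ x - s*v := by nlinarith
      exact this.trans (le_abs_self _)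
    have h4 : η*(v*s) ≤ (1-η)*|x - s*v| := by
      calc η*(v*s) ≤ η*((1-η)*x) := mul_le_mul_of_nonneg_left h2 hη.le
        _ = (1-η)*(η*x) := by ring
        _ ≤ (1-η)*|x - s*v| := mul_le_mul_of_nonneg_left h1 hη3.le
    have h5 : (η*(v*s))^2 ≤ ((1-η)*|x - s*v|)^2 :=
      pow_le_pow_left₀ (by positivity) h4 2
    rw [div_le_div_iff₀ hs0 (by positivity), hM_def, div_mul_eq_mul_div,
      div_le_iff₀ (by positivity)]
    nlinarith [mul_le_mul_of_nonneg_left h5 (show (0:ℝ) ≤ 12*s by positivity)]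
  have hhigh : ∀ s ∈ Set.Icc b ε, M'/s ≤ 3*|x - s*v|^2/(4*s^3) := by
    intro s hs
    obtain ⟨hsb, hsε⟩ := hs
    have hs0 : 0 < s := lt_of_lt_of_le hb hsb
    have h2 : (1+η)*x ≤ v*s := by
      rw [hb_def, div_le_iff₀ hv] at hsb
      linarith
    have h1 : η*(v*s) ≤ (1+η)*|x - s*v| := by
      have habs : s*v - x ≤ |x - s*v| := by
        rw [abs_sub_comm]; exact le_abs_self _
      nlinarith [abs_nonneg (x - s*v)]
    have h5 : (η*(v*s))^2 ≤ ((1+η)*|x - s*v|)^2 :=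
      pow_le_pow_left₀ (by positivity) h1 2
    rw [div_le_div_iff₀ hs0 (by positivity), hM'_def, div_mul_eq_mul_div,
      div_le_iff₀ (by positivity)]
    nlinarith [mul_le_mul_of_nonneg_left h5 (show (0:ℝ) ≤ 12*s by positivity)]
  -- integrability on [0,a]
  have h0a_int : IntervalIntegrable (fker v x) volume 0 a := by
    rw [intervalIntegrable_iff_integrableOn_Ioc_of_le ha.le]
    refine Measure.integrableOn_of_bounded (M := 4*Real.sqrt a/M^2)
      measure_Ioc_lt_top.ne (measurable_fker v x).aestronglyMeasurable ?_
    filter_upwards [ae_restrict_mem measurableSet_Ioc] with s hs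
    rw [Real.norm_eq_abs, abs_of_nonneg (fker_nonneg v x s hs.1.le)]
    calc fker v x s ≤ 4*Real.sqrt s/M^2 :=
          fker_le_of_exponent v x M s hM hs.1 (hlow s hs)
      _ ≤ 4*Real.sqrt a/M^2 := by
          apply (div_le_div_iff_of_pos_right (by positivity)).mpr
          have := Real.sqrt_le_sqrt hs.2
          linarith
  have habsub : Set.uIcc a b ⊆ {s : ℝ | 0 < s} := by
    rw [Set.uIcc_of_le hab]
    intro s hs; exact lt_of_lt_of_le ha hs.1
  have hbεsub : Set.uIcc b ε ⊆ {s : ℝ | 0 < s} := by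
    rw [Set.uIcc_of_le hbe]
    intro s hs; exact lt_of_lt_of_le hb hs.1
  have hab_int : IntervalIntegrable (fker v x) volume a b :=
    ((continuousOn_fker v x).mono habsub).intervalIntegrable
  have hbε_int : IntervalIntegrable (fker v x) volume b ε :=
    ((continuousOn_fker v x).mono hbεsub).intervalIntegrable
  have hg_cont : ContinuousOn (fun s => uu' v x s * Real.exp (-(uu v x s)^2)) {s : ℝ | 0 < s} := by
    apply (continuousOn_uu' v x).mul
    apply Real.continuous_exp.comp_continuousOn
    exact (((continuousOn_uu v x).pow 2).neg)
  have hg_int : IntervalIntegrable (fun s => uu' v x s * Real.exp (-(uu v x s)^2)) volume a b :=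
    (hg_cont.mono habsub).intervalIntegrable
  -- tail bounds
  have hT1 : (∫ s in (0:ℝ)..a, fker v x s) ≤ (4/M^2) * (Real.sqrt ε * ε) := by
    have hpt : ∀ s ∈ Set.Icc (0:ℝ) a, fker v x s ≤ 4*Real.sqrt ε/M^2 := by
      intro s hs
      rcases eq_or_lt_of_le hs.1 with h|h
      · rw [← h, fker_zero]; positivity
      · calc fker v x s ≤ 4*Real.sqrt s/M^2 :=
              fker_le_of_exponent v x M s hM h (hlow s ⟨h, hs.2⟩)
          _ ≤ 4*Real.sqrt ε/M^2 := by
              apply (div_le_div_iff_of_pos_right (by positivity)).mpr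
              have := Real.sqrt_le_sqrt (hs.2.trans (hab.trans hbe))
              linarith
    calc (∫ s in (0:ℝ)..a, fker v x s)
        ≤ ∫ _s in (0:ℝ)..a, 4*Real.sqrt ε/M^2 :=
          intervalIntegral.integral_mono_on ha.le h0a_int intervalIntegrable_const hpt
      _ = a * (4*Real.sqrt ε/M^2) := by
          rw [intervalIntegral.integral_const, smul_eq_mul, sub_zero]
      _ ≤ (4/M^2) * (Real.sqrt ε * ε) := by
          rw [show (4/M^2) * (Real.sqrt ε * ε) = ε * (4*Real.sqrt ε/M^2) by ring]
          gcongr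
          exact hab.trans hbe
  have hT2 : (∫ s in b..ε, fker v x s) ≤ (4/M'^2) * (Real.sqrt ε * ε) := by
    have hpt : ∀ s ∈ Set.Icc b ε, fker v x s ≤ 4*Real.sqrt ε/M'^2 := by
      intro s hs
      have hs0 : 0 < s := lt_of_lt_of_le hb hs.1
      calc fker v x s ≤ 4*Real.sqrt s/M'^2 :=
            fker_le_of_exponent v x M' s hM' hs0 (hhigh s hs)
        _ ≤ 4*Real.sqrt ε/M'^2 := by
            apply (div_le_div_iff_of_pos_right (by positivity)).mpr
            have := Real.sqrt_le_sqrt hs.2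
            linarith
    calc (∫ s in b..ε, fker v x s)
        ≤ ∫ _s in b..ε, 4*Real.sqrt ε/M'^2 :=
          intervalIntegral.integral_mono_on hbe hbε_int intervalIntegrable_const hpt
      _ = (ε - b) * (4*Real.sqrt ε/M'^2) := by
          rw [intervalIntegral.integral_const, smul_eq_mul]
      _ ≤ (4/M'^2) * (Real.sqrt ε * ε) := by
          rw [show (4/M'^2) * (Real.sqrt ε * ε) = ε * (4*Real.sqrt ε/M'^2) by ring]
          gcongr
          linarith
  -- middle comparisons
  have hG : (∫ s in a..b, uu' v x s * Real.exp (-(uu v x s)^2))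
      = ∫ t in (uu v x a)..(uu v x b), Real.exp (-t^2) := subst_eq v x a b ha hab
  have hmid_up : (∫ s in a..b, fker v x s)
      ≤ (4*(1+η)/(Real.sqrt 3 * (v*(2-η)))) * ∫ t in (uu v x a)..(uu v x b), Real.exp (-t^2) := by
    have hpt : ∀ s ∈ Set.Icc a b, fker v x s
        ≤ (4*(1+η)/(Real.sqrt 3 * (v*(2-η)))) * (uu' v x s * Real.exp (-(uu v x s)^2)) := by
      intro s hs
      have hs0 : 0 < s := lt_of_lt_of_le ha hs.1
      have hr := (rpow_ratio v x η s hv hx hη hη2 hs.1 hs.2).2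
      have hE : Real.exp (-(uu v x s)^2)
          = Real.exp (-(3 * |x - s * v| ^ 2 / (4 * s ^ 3))) := by
        rw [sq_uu v x s hs0]
      rw [show (4*(1+η)/(Real.sqrt 3 * (v*(2-η)))) * (uu' v x s * Real.exp (-(uu v x s)^2))
          = ((4*(1+η)/(Real.sqrt 3 * (v*(2-η)))) * uu' v x s) * Real.exp (-(uu v x s)^2) by ring,
        hE]
      exact mul_le_mul_of_nonneg_right hr (Real.exp_pos _).le
    calc (∫ s in a..b, fker v x s)
        ≤ ∫ s in a..b, (4*(1+η)/(Real.sqrt 3 * (v*(2-η)))) * (uu' v x s * Real.exp (-(uu v x s)^2)) :=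
          intervalIntegral.integral_mono_on hab hab_int (hg_int.const_mul _) hpt
      _ = (4*(1+η)/(Real.sqrt 3 * (v*(2-η)))) * ∫ t in (uu v x a)..(uu v x b), Real.exp (-t^2) := by
          rw [intervalIntegral.integral_const_mul, hG]
  have hmid_lo : (4*(1-η)/(Real.sqrt 3 * (v*(2+η)))) *
      (∫ t in (uu v x a)..(uu v x b), Real.exp (-t^2)) ≤ ∫ s in a..b, fker v x s := by
    have hpt : ∀ s ∈ Set.Icc a b,
        (4*(1-η)/(Real.sqrt 3 * (v*(2+η)))) * (uu' v x s * Real.exp (-(uu v x s)^2))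
          ≤ fker v x s := by
      intro s hs
      have hs0 : 0 < s := lt_of_lt_of_le ha hs.1
      have hr := (rpow_ratio v x η s hv hx hη hη2 hs.1 hs.2).1
      have hE : Real.exp (-(uu v x s)^2)
          = Real.exp (-(3 * |x - s * v| ^ 2 / (4 * s ^ 3))) := by
        rw [sq_uu v x s hs0]
      rw [show (4*(1-η)/(Real.sqrt 3 * (v*(2+η)))) * (uu' v x s * Real.exp (-(uu v x s)^2))
          = ((4*(1-η)/(Real.sqrt 3 * (v*(2+η)))) * uu' v x s) * Real.exp (-(uu v x s)^2) by ring,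
        hE]
      exact mul_le_mul_of_nonneg_right hr (Real.exp_pos _).le
    calc (4*(1-η)/(Real.sqrt 3 * (v*(2+η)))) * (∫ t in (uu v x a)..(uu v x b), Real.exp (-t^2))
        = ∫ s in a..b, (4*(1-η)/(Real.sqrt 3 * (v*(2+η)))) * (uu' v x s * Real.exp (-(uu v x s)^2)) := by
          rw [intervalIntegral.integral_const_mul, hG]
      _ ≤ ∫ s in a..b, fker v x s :=
          intervalIntegral.integral_mono_on hab (hg_int.const_mul _) hab_int hpt
  -- splitting
  have e1 := intervalIntegral.integral_add_adjacent_intervals h0a_int hab_int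
  have e2 := intervalIntegral.integral_add_adjacent_intervals (h0a_int.trans hab_int) hbε_int
  have hT1n : 0 ≤ ∫ s in (0:ℝ)..a, fker v x s :=
    intervalIntegral.integral_nonneg ha.le (fun s hs => fker_nonneg v x s hs.1)
  have hT2n : 0 ≤ ∫ s in b..ε, fker v x s :=
    intervalIntegral.integral_nonneg hbe (fun s hs => fker_nonneg v x s (hb.le.trans hs.1))
  constructor
  · linarith [hmid_lo, e1, e2, hT1n, hT2n]
  · have hsum : (4/M^2 + 4/M'^2) * (Real.sqrt ε * ε)
        = (4/M^2)*(Real.sqrt ε*ε) + (4/M'^2)*(Real.sqrt ε*ε) := by ring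
    linarith [hT1, hT2, e1, e2, hmid_up, hsum]

/-- The time-integrated Fokker–Planck kernel concentrates at `s = x/v` and
contributes the boundary flux factor `1/v`. -/
theorem stmt_3 (v : ℝ) (hv : 0 < v) (x : ℝ → ℝ)
    (hxpos : ∀ ε > 0, 0 < x ε)
    (hx0 : Tendsto (fun ε => x ε / ε) (nhdsWithin 0 (Set.Ioi 0)) (nhds 0)) :
    Tendsto (fun ε => Real.sqrt 3 / (2 * Real.sqrt π) *
        ∫ s in (0:ℝ)..ε, (1 / s ^ ((3:ℝ)/2)) *
          Real.exp (-(3 * |x ε - s * v| ^ 2 / (4 * s ^ 3))))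
      (nhdsWithin 0 (Set.Ioi 0)) (nhds (1 / v)) := by
  set l := nhdsWithin (0:ℝ) (Set.Ioi 0) with hl
  have hεpos : ∀ᶠ ε in l, (0:ℝ) < ε := by
    filter_upwards [self_mem_nhdsWithin] with ε hε using hε
  have hxpos' : ∀ᶠ ε in l, 0 < x ε := by
    filter_upwards [hεpos] with ε hε using hxpos ε hε
  have hεlim : Tendsto (fun ε : ℝ => ε) l (𝓝 0) := tendsto_id.mono_right nhdsWithin_le_nhds
  have hx_to : Tendsto x l (𝓝 0) := by
    have h := hx0.mul hεlim
    rw [mul_zero] at h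
    apply h.congr'
    filter_upwards [hεpos] with ε hε
    exact div_mul_cancel₀ _ (ne_of_gt hε)
  have hsq_to : Tendsto (fun ε => Real.sqrt (x ε)) l (nhdsWithin 0 (Set.Ioi 0)) := by
    apply tendsto_nhdsWithin_of_tendsto_nhds_of_eventually_within
    · have : Tendsto Real.sqrt (𝓝 0) (𝓝 0) := by
        simpa using Real.continuous_sqrt.tendsto 0
      exact this.comp hx_to
    · filter_upwards [hxpos'] with ε hε using Real.sqrt_pos.2 hε
  have hinv_to : Tendsto (fun ε => (Real.sqrt (x ε))⁻¹) l atTop :=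
    tendsto_inv_nhdsGT_zero.comp hsq_to
  have hgauss_int : Integrable (fun t : ℝ => Real.exp (-t^2)) := by
    simpa using integrable_exp_neg_mul_sq (b := (1:ℝ)) one_pos
  have hgauss_val : (∫ t : ℝ, Real.exp (-t^2)) = Real.sqrt π := by
    simpa using integral_gaussian 1
  have hsε : Tendsto (fun ε : ℝ => Real.sqrt ε * ε) l (𝓝 0) := by
    have h := ((Real.continuous_sqrt.mul continuous_id).tendsto 0).comp hεlim
    simp at h; exact h
  have h3ne : Real.sqrt 3 ≠ 0 := ne_of_gt (Real.sqrt_pos.2 (by norm_num))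
  have hπne : Real.sqrt π ≠ 0 := ne_of_gt (Real.sqrt_pos.2 Real.pi_pos)
  have hP0 : (0:ℝ) ≤ Real.sqrt 3 / (2 * Real.sqrt π) := by positivity
  -- generic limits for the substituted endpoints, for any 0 < η ≤ 1/2
  have endpoints : ∀ η : ℝ, 0 < η → η ≤ 1/2 →
      (Tendsto (fun ε => uu v (x ε) ((1-η)*(x ε)/v)) l atBot ∧
       Tendsto (fun ε => uu v (x ε) ((1+η)*(x ε)/v)) l atTop) := by
    intro η hη hη2
    constructor
    · have hKneg : ((Real.sqrt 3/2) * ((1-η) - 1) * ((1-η)/v) ^ (-(3:ℝ)/2)) < 0 := by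
        have h1 : (0:ℝ) < ((1-η)/v) ^ (-(3:ℝ)/2) :=
          Real.rpow_pos_of_pos (div_pos (by linarith) hv) _
        have h2 : (0:ℝ) < Real.sqrt 3 := Real.sqrt_pos.2 (by norm_num)
        have h3 : (Real.sqrt 3/2 * ((1-η) - 1)) < 0 := by nlinarith
        exact mul_neg_of_neg_of_pos h3 h1
      have h2 := Tendsto.const_mul_atTop_of_neg hKneg hinv_to
      apply h2.congr'
      filter_upwards [hxpos'] with ε hxe
      exact (uu_scaled v (x ε) (1-η) hv hxe (by linarith)).symm
    · have hKpos : (0:ℝ) < ((Real.sqrt 3/2) * ((1+η) - 1) * ((1+η)/v) ^ (-(3:ℝ)/2)) := by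
        have h1 : (0:ℝ) < ((1+η)/v) ^ (-(3:ℝ)/2) :=
          Real.rpow_pos_of_pos (div_pos (by linarith) hv) _
        have h2 : (0:ℝ) < Real.sqrt 3 := Real.sqrt_pos.2 (by norm_num)
        have h3 : (0:ℝ) < (Real.sqrt 3/2 * ((1+η) - 1)) := by nlinarith
        exact mul_pos h3 h1
      have h2 := Tendsto.const_mul_atTop hKpos hinv_to
      apply h2.congr'
      filter_upwards [hxpos'] with ε hxe
      exact (uu_scaled v (x ε) (1+η) hv hxe (by linarith)).symm
  have hb_ev : ∀ η : ℝ, 0 < η → (∀ᶠ ε in l, (1+η)*(x ε)/v ≤ ε) := by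
    intro η hη
    have hpos : (0:ℝ) < v/(1+η) := div_pos hv (by linarith)
    have h1 : ∀ᶠ ε in l, x ε / ε < v/(1+η) := hx0.eventually_lt_const hpos
    filter_upwards [h1, hεpos] with ε h2 h3
    rw [div_le_iff₀ hv]
    rw [div_lt_iff₀ h3] at h2
    have h4 := mul_lt_mul_of_pos_left h2 (show (0:ℝ) < 1+η by linarith)
    have h5 : (1+η)*(v/(1+η)*ε) = ε*v := by field_simp
    linarith [h4, h5.le, h5.ge]
  have hGlim : ∀ η : ℝ, 0 < η → η ≤ 1/2 →
      Tendsto (fun ε => ∫ t in (uu v (x ε) ((1-η)*(x ε)/v))..(uu v (x ε) ((1+η)*(x ε)/v)),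
        Real.exp (-t^2)) l (𝓝 (Real.sqrt π)) := by
    intro η hη hη2
    obtain ⟨hA, hB⟩ := endpoints η hη hη2
    have := MeasureTheory.intervalIntegral_tendsto_integral hgauss_int hA hB
    rwa [hgauss_val] at this
  refine tendsto_order.2 ⟨fun c hc => ?_, fun c hc => ?_⟩
  · -- lower bound branch
    have hcv : c * v < 1 := by
      rw [lt_div_iff₀ hv] at hc; linarith
    set η := min (1/2 : ℝ) ((1 - c*v)/4) with hη_def
    have hη : 0 < η := lt_min (by norm_num) (by linarith)
    have hη2 : η ≤ 1/2 := min_le_left _ _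
    have hη4 : η ≤ (1 - c*v)/4 := min_le_right _ _
    have hPK : Real.sqrt 3/(2*Real.sqrt π) *
        (4*(1-η)/(Real.sqrt 3 * (v*(2+η))) * Real.sqrt π) = 2*(1-η)/(v*(2+η)) := by
      field_simp
      ring
    have hLc : c < Real.sqrt 3/(2*Real.sqrt π) *
        (4*(1-η)/(Real.sqrt 3 * (v*(2+η))) * Real.sqrt π) := by
      rw [hPK, lt_div_iff₀ (by positivity)]
      nlinarith
    have hlo_lim := ((hGlim η hη hη2).const_mul
        (4*(1-η)/(Real.sqrt 3 * (v*(2+η))))).const_mul (Real.sqrt 3/(2*Real.sqrt π))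
    have hev1 := (tendsto_order.1 hlo_lim).1 c hLc
    filter_upwards [hev1, hb_ev η hη, hxpos'] with ε h1 h2 h3
    have hmb := (main_bounds v (x ε) ε η hv h3 hη hη2 h2).1
    show c < Real.sqrt 3/(2*Real.sqrt π) * ∫ s in (0:ℝ)..ε, fker v (x ε) s
    calc c < Real.sqrt 3/(2*Real.sqrt π) *
          (4*(1-η)/(Real.sqrt 3 * (v*(2+η))) *
            ∫ t in (uu v (x ε) ((1-η)*(x ε)/v))..(uu v (x ε) ((1+η)*(x ε)/v)),
              Real.exp (-t^2)) := h1
      _ ≤ Real.sqrt 3/(2*Real.sqrt π) * ∫ s in (0:ℝ)..ε, fker v (x ε) s :=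
          mul_le_mul_of_nonneg_left hmb hP0
  · -- upper bound branch
    have hcv : 1 < c * v := by
      have hc' : 1/v < c := hc
      rw [div_lt_iff₀ hv] at hc'; linarith
    set η := min (1/2 : ℝ) ((c*v - 1)/4) with hη_def
    have hη : 0 < η := lt_min (by norm_num) (by linarith)
    have hη2 : η ≤ 1/2 := min_le_left _ _
    have hη4 : η ≤ (c*v - 1)/4 := min_le_right _ _
    have hPK : Real.sqrt 3/(2*Real.sqrt π) *
        (4*(1+η)/(Real.sqrt 3 * (v*(2-η))) * Real.sqrt π) = 2*(1+η)/(v*(2-η)) := by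
      have h2η : ((2:ℝ) - η) ≠ 0 := by
        have : η ≤ 1/2 := hη2
        intro h; linarith [h.ge, h.le]
      field_simp
      ring
    have hLc : Real.sqrt 3/(2*Real.sqrt π) *
        (4*(1+η)/(Real.sqrt 3 * (v*(2-η))) * Real.sqrt π
          + (4/(3*η^2*v^2/(4*(1-η)^2))^2 + 4/(3*η^2*v^2/(4*(1+η)^2))^2) * 0) < c := by
      rw [mul_zero, add_zero, hPK, div_lt_iff₀ (mul_pos hv (by linarith : (0:ℝ) < 2 - η))]
      nlinarith
    have hhi_lim := (((hGlim η hη hη2).const_mul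
          (4*(1+η)/(Real.sqrt 3 * (v*(2-η))))).add
        (hsε.const_mul (4/(3*η^2*v^2/(4*(1-η)^2))^2 + 4/(3*η^2*v^2/(4*(1+η)^2))^2))).const_mul
        (Real.sqrt 3/(2*Real.sqrt π))
    rw [mul_zero, add_zero] at hLc
    rw [show (4*(1+η)/(Real.sqrt 3 * (v*(2-η))) * Real.sqrt π
        + (4/(3*η^2*v^2/(4*(1-η)^2))^2 + 4/(3*η^2*v^2/(4*(1+η)^2))^2) * 0)
      = 4*(1+η)/(Real.sqrt 3 * (v*(2-η))) * Real.sqrt π by rw [mul_zero, add_zero]] at hhi_lim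
    have hev2 := (tendsto_order.1 hhi_lim).2 c hLc
    filter_upwards [hev2, hb_ev η hη, hxpos'] with ε h1 h2 h3
    have hmb := (main_bounds v (x ε) ε η hv h3 hη hη2 h2).2
    show Real.sqrt 3/(2*Real.sqrt π) * (∫ s in (0:ℝ)..ε, fker v (x ε) s) < c
    calc Real.sqrt 3/(2*Real.sqrt π) * (∫ s in (0:ℝ)..ε, fker v (x ε) s)
        ≤ Real.sqrt 3/(2*Real.sqrt π) *
          (4*(1+η)/(Real.sqrt 3 * (v*(2-η))) *
            (∫ t in (uu v (x ε) ((1-η)*(x ε)/v))..(uu v (x ε) ((1+η)*(x ε)/v)),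
              Real.exp (-t^2))
            + (4/(3*η^2*v^2/(4*(1-η)^2))^2 + 4/(3*η^2*v^2/(4*(1+η)^2))^2)
              * (Real.sqrt ε * ε)) :=
          mul_le_mul_of_nonneg_left hmb hP0
      _ < c := h1
end

section
/- Let $\mathcal{M}f = f_t + v f_x - f_{vv}$ and let $U_T^1 = (0,1) \times (-L,L) \times (0,T)$ with $L, T > 0$. If $f \in C^{1,2,1}_{x,v,t}(U_T^1) \cap C(\overline{U_T^1})$ satisfies $\mathcal{M}f \le 0$ on $U_T^1$, then $f$ attains its maximum over $\overline{U_T^1}$ on the set $\{t=0\} \cup \{x=0, v\ge 0\} \cup \{x=1, v\le 0\} \cup \{v = \pm L\}$. -/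
open Set Filter Topology

lemma deriv_nonneg_of_max_left {h : ℝ → ℝ} {c d : ℝ} (hd : HasDerivAt h d c)
    (H : ∀ᶠ t in 𝓝[<] c, h t ≤ h c) : 0 ≤ d := by
  have hs : Tendsto (slope h c) (𝓝[≠] c) (𝓝 d) := hasDerivAt_iff_tendsto_slope.mp hd
  have hs' : Tendsto (slope h c) (𝓝[<] c) (𝓝 d) :=
    hs.mono_left (nhdsWithin_mono c (fun t ht => ne_of_lt ht))
  refine ge_of_tendsto hs' ?_
  filter_upwards [H, self_mem_nhdsWithin] with t hht ht
  rw [slope_def_field]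
  exact div_nonneg_of_nonpos (sub_nonpos.mpr hht) (le_of_lt (sub_neg.mpr ht))

lemma deriv_nonpos_of_max_right {h : ℝ → ℝ} {c d : ℝ} (hd : HasDerivAt h d c)
    (H : ∀ᶠ t in 𝓝[>] c, h t ≤ h c) : d ≤ 0 := by
  have hs : Tendsto (slope h c) (𝓝[≠] c) (𝓝 d) := hasDerivAt_iff_tendsto_slope.mp hd
  have hs' : Tendsto (slope h c) (𝓝[>] c) (𝓝 d) :=
    hs.mono_left (nhdsWithin_mono c (fun t ht => ne_of_gt ht))
  refine le_of_tendsto hs' ?_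
  filter_upwards [H, self_mem_nhdsWithin] with t hht ht
  rw [slope_def_field]
  exact div_nonpos_iff.mpr (Or.inr ⟨sub_nonpos.mpr hht, le_of_lt (sub_pos.mpr ht)⟩)

lemma kfp_core (L T : ℝ) (hL : 0 < L) (hT : 0 < T)
    (f ft fx fv fvv : ℝ × ℝ × ℝ → ℝ)
    (hcont : ContinuousOn f (Set.Icc 0 1 ×ˢ Set.Icc (-L) L ×ˢ Set.Icc 0 T))
    (hft : ∀ p ∈ Set.Ioo (0:ℝ) 1 ×ˢ Set.Ioo (-L) L ×ˢ Set.Ioo 0 T,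
      HasDerivAt (fun t => f (p.1, p.2.1, t)) (ft p) p.2.2)
    (hfx : ∀ p ∈ Set.Ioo (0:ℝ) 1 ×ˢ Set.Ioo (-L) L ×ˢ Set.Ioo 0 T,
      HasDerivAt (fun x => f (x, p.2.1, p.2.2)) (fx p) p.1)
    (hfv : ∀ p ∈ Set.Ioo (0:ℝ) 1 ×ˢ Set.Ioo (-L) L ×ˢ Set.Ioo 0 T,
      HasDerivAt (fun v => f (p.1, v, p.2.2)) (fv p) p.2.1)
    (hfvv : ∀ p ∈ Set.Ioo (0:ℝ) 1 ×ˢ Set.Ioo (-L) L ×ˢ Set.Ioo 0 T,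
      HasDerivAt (fun v => fv (p.1, v, p.2.2)) (fvv p) p.2.1)
    (hsub : ∀ p ∈ Set.Ioo (0:ℝ) 1 ×ˢ Set.Ioo (-L) L ×ˢ Set.Ioo 0 T,
      ft p + p.2.1 * fx p - fvv p ≤ 0)
    (a ε : ℝ) (ha0 : 0 < a) (ha1 : a < 1/2) (haT : a < T) (hε : 0 < ε) :
    ∃ p ∈ Set.Icc a (1-a) ×ˢ Set.Icc (-L) L ×ˢ Set.Icc 0 (T-a),
      IsMaxOn (fun q => f q - ε * q.2.2)
        (Set.Icc a (1-a) ×ˢ Set.Icc (-L) L ×ˢ Set.Icc 0 (T-a)) p ∧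
      (p.2.2 = 0 ∨ (p.1 = a ∧ 0 ≤ p.2.1) ∨ (p.1 = 1 - a ∧ p.2.1 ≤ 0) ∨
        p.2.1 = L ∨ p.2.1 = -L) := by
  set Ka : Set (ℝ × ℝ × ℝ) := Set.Icc a (1-a) ×ˢ Set.Icc (-L) L ×ˢ Set.Icc 0 (T-a) with hKa
  have hKsub : Ka ⊆ Set.Icc 0 1 ×ˢ Set.Icc (-L) L ×ˢ Set.Icc 0 T := by
    refine Set.prod_mono (Set.Icc_subset_Icc (by linarith) (by linarith))
      (Set.prod_mono subset_rfl (Set.Icc_subset_Icc le_rfl (by linarith)))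
  have hcomp : IsCompact Ka := (isCompact_Icc.prod (isCompact_Icc.prod isCompact_Icc))
  have hne : Ka.Nonempty :=
    ⟨(a, 0, 0), ⟨le_rfl, show a ≤ 1 - a by linarith⟩,
      ⟨show -L ≤ (0:ℝ) by linarith, le_of_lt hL⟩,
      le_rfl, show (0:ℝ) ≤ T - a by linarith⟩
  have hgc : ContinuousOn (fun q : ℝ × ℝ × ℝ => f q - ε * q.2.2) Ka :=
    (hcont.mono hKsub).sub ((continuous_const.mul (continuous_snd.comp continuous_snd)).continuousOn)
  obtain ⟨p, hpKa, hmax⟩ := hcomp.exists_isMaxOn hne hgc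
  refine ⟨p, hpKa, hmax, ?_⟩
  have gle : ∀ q ∈ Ka, f q - ε * q.2.2 ≤ f p - ε * p.2.2 := fun q hq => hmax hq
  by_contra hbad
  push_neg at hbad
  obtain ⟨x, v, t⟩ := p
  obtain ⟨ht0, hB, hC, hvL, hvnL⟩ := hbad
  simp only [hKa, Set.mem_prod, Set.mem_Icc] at hpKa
  obtain ⟨⟨hax, hx1⟩, ⟨hv1, hv2⟩, ht1, ht2⟩ := hpKa
  have ht : 0 < t := lt_of_le_of_ne ht1 (Ne.symm ht0)
  have hvlt1 : -L < v := lt_of_le_of_ne hv1 (Ne.symm hvnL)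
  have hvlt2 : v < L := lt_of_le_of_ne hv2 hvL
  have pO : ((x, v, t) : ℝ × ℝ × ℝ) ∈
      Set.Ioo (0:ℝ) 1 ×ˢ Set.Ioo (-L) L ×ˢ Set.Ioo 0 T :=
    ⟨⟨lt_of_lt_of_le ha0 hax, lt_of_le_of_lt hx1 (by linarith)⟩, ⟨hvlt1, hvlt2⟩,
      ht, lt_of_le_of_lt ht2 (by linarith)⟩
  -- time derivative bound : ft ≥ ε
  have hεt : HasDerivAt (fun s : ℝ => ε * s) ε t := by
    simpa using (hasDerivAt_id t).const_mul ε
  have hht : HasDerivAt (fun s => f (x, v, s) - ε * s) (ft (x, v, t) - ε) t :=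
    (hft _ pO).sub hεt
  have hfte : 0 ≤ ft (x, v, t) - ε := by
    refine deriv_nonneg_of_max_left hht ?_
    filter_upwards [Ioo_mem_nhdsLT_of_mem (show t ∈ Set.Ioc 0 t from ⟨ht, le_rfl⟩)] with s hs
    have hmem : ((x, v, s) : ℝ × ℝ × ℝ) ∈ Ka :=
      ⟨⟨hax, hx1⟩, ⟨hv1, hv2⟩, le_of_lt hs.1, le_trans (le_of_lt hs.2) ht2⟩
    exact hmax hmem
  -- space derivative: v * fx ≥ 0
  have hvfx : 0 ≤ v * fx (x, v, t) := by
    rcases eq_or_lt_of_le hax with hxa | hxa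
    · have hv0 : v < 0 := hB hxa.symm
      have hfxle : fx (x, v, t) ≤ 0 := by
        refine deriv_nonpos_of_max_right (hfx _ pO) ?_
        filter_upwards [Ioo_mem_nhdsGT_of_mem
          (show x ∈ Set.Ico x (1-a) from ⟨le_rfl, by rw [← hxa]; linarith⟩)] with y hy
        have hmem : ((y, v, t) : ℝ × ℝ × ℝ) ∈ Ka :=
          ⟨⟨le_trans hax (le_of_lt hy.1), le_of_lt hy.2⟩, ⟨hv1, hv2⟩, ht1, ht2⟩
        have h2 : f (y, v, t) - ε * t ≤ f (x, v, t) - ε * t := gle _ hmem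
        linarith
      nlinarith
    · rcases eq_or_lt_of_le hx1 with hxb | hxb
      · have hv0 : 0 < v := hC hxb
        have hfxge : 0 ≤ fx (x, v, t) := by
          refine deriv_nonneg_of_max_left (hfx _ pO) ?_
          filter_upwards [Ioo_mem_nhdsLT_of_mem
            (show x ∈ Set.Ioc a x from ⟨hxa, le_rfl⟩)] with y hy
          have hmem : ((y, v, t) : ℝ × ℝ × ℝ) ∈ Ka :=
            ⟨⟨le_of_lt hy.1, le_trans (le_of_lt hy.2) hx1⟩, ⟨hv1, hv2⟩, ht1, ht2⟩
          have h2 : f (y, v, t) - ε * t ≤ f (x, v, t) - ε * t := gle _ hmem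
          linarith
        exact mul_nonneg (le_of_lt hv0) hfxge
      · have hfx0 : fx (x, v, t) = 0 := by
          refine IsLocalMax.hasDerivAt_eq_zero ?_ (hfx _ pO)
          filter_upwards [Ioo_mem_nhds hxa hxb] with y hy
          have hmem : ((y, v, t) : ℝ × ℝ × ℝ) ∈ Ka :=
            ⟨⟨le_of_lt hy.1, le_of_lt hy.2⟩, ⟨hv1, hv2⟩, ht1, ht2⟩
          have h2 : f (y, v, t) - ε * t ≤ f (x, v, t) - ε * t := gle _ hmem
          linarith
        rw [hfx0, mul_zero]
  -- fv = 0
  have hfv0 : fv (x, v, t) = 0 := by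
    refine IsLocalMax.hasDerivAt_eq_zero ?_ (hfv _ pO)
    filter_upwards [Ioo_mem_nhds hvlt1 hvlt2] with w hw
    have hmem : ((x, w, t) : ℝ × ℝ × ℝ) ∈ Ka :=
      ⟨⟨hax, hx1⟩, ⟨le_of_lt hw.1, le_of_lt hw.2⟩, ht1, ht2⟩
    have h2 : f (x, w, t) - ε * t ≤ f (x, v, t) - ε * t := gle _ hmem
    linarith
  -- fvv ≤ 0
  have hfvvle : fvv (x, v, t) ≤ 0 := by
    by_contra h'
    push_neg at h'
    have hslope : Tendsto (slope (fun w => fv (x, w, t)) v) (𝓝[≠] v) (𝓝 (fvv (x, v, t))) :=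
      hasDerivAt_iff_tendsto_slope.mp (hfvv _ pO)
    have hev : ∀ᶠ w in 𝓝[>] v,
        0 < slope (fun w => fv (x, w, t)) v w ∧ w ∈ Set.Ioo v L := by
      refine Filter.Eventually.and ?_ ?_
      · exact (hslope.mono_left (nhdsWithin_mono v (fun w hw => ne_of_gt hw))).eventually
          (eventually_gt_nhds h')
      · exact Ioo_mem_nhdsGT_of_mem ⟨le_rfl, hvlt2⟩
    obtain ⟨s, hsmem, hsprop⟩ := Filter.eventually_iff_exists_mem.mp hev
    obtain ⟨u, hu, hIoo⟩ := mem_nhdsGT_iff_exists_Ioo_subset.mp hsmem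
    set c : ℝ := (v + min u L) / 2 with hc
    have hvu : v < min u L := lt_min hu hvlt2
    have hvc : v < c := by rw [hc]; linarith
    have hcu : c < u := by
      have := min_le_left u L; rw [hc]; linarith
    have hcL : c < L := by
      have := min_le_right u L; rw [hc]; linarith
    have key : ∀ w ∈ Set.Ioo v c, 0 < fv (x, w, t) := by
      intro w hw
      have hwu : w ∈ Set.Ioo v u := ⟨hw.1, lt_trans hw.2 hcu⟩
      obtain ⟨hsl, _⟩ := hsprop w (hIoo hwu)
      rw [slope_def_field, hfv0, sub_zero] at hsl
      rcases div_pos_iff.mp hsl with ⟨h1, _⟩ | ⟨_, h2⟩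
      · exact h1
      · exact absurd (sub_pos.mpr hw.1) (not_lt.mpr (le_of_lt h2))
    have hmono : StrictMonoOn (fun w => f (x, w, t)) (Set.Icc v c) := by
      refine strictMonoOn_of_deriv_pos (convex_Icc v c) ?_ ?_
      · refine hcont.comp (Continuous.continuousOn (continuous_const.prodMk (continuous_id.prodMk continuous_const))) ?_
        intro w hw
        exact ⟨⟨by linarith [hw.1], by linarith [hw.2]⟩,
          ⟨by linarith [hw.1], by linarith [hw.2]⟩, ht1, by linarith⟩
      · intro w hw
        rw [interior_Icc] at hw
        have hwO : ((x, w, t) : ℝ × ℝ × ℝ) ∈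
            Set.Ioo (0:ℝ) 1 ×ˢ Set.Ioo (-L) L ×ˢ Set.Ioo 0 T :=
          ⟨pO.1, ⟨lt_trans hvlt1 hw.1, lt_trans hw.2 hcL⟩, pO.2.2⟩
        rw [(hfv _ hwO).deriv]
        exact key w hw
    have hlt : f (x, v, t) < f (x, c, t) :=
      hmono ⟨le_rfl, le_of_lt hvc⟩ ⟨le_of_lt hvc, le_rfl⟩ hvc
    have hmem : ((x, c, t) : ℝ × ℝ × ℝ) ∈ Ka :=
      ⟨⟨hax, hx1⟩, ⟨by linarith, le_of_lt hcL⟩, ht1, ht2⟩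
    have h2 : f (x, c, t) - ε * t ≤ f (x, v, t) - ε * t := gle _ hmem
    linarith
  have hS : ft (x, v, t) + v * fx (x, v, t) - fvv (x, v, t) ≤ 0 := hsub _ pO
  linarith

/-- Maximum principle for the kinetic Fokker–Planck operator
`𝓜 f = f_t + v f_x - f_vv` on the bounded domain `(0,1) × (-L,L) × (0,T)`:
a subsolution attains its maximum on
`{t=0} ∪ {x=0, v ≥ 0} ∪ {x=1, v ≤ 0} ∪ {v = ± L}`. -/
theorem stmt_5 (L T : ℝ) (hL : 0 < L) (hT : 0 < T)
    (f ft fx fv fvv : ℝ × ℝ × ℝ → ℝ)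
    (hcont : ContinuousOn f (Set.Icc 0 1 ×ˢ Set.Icc (-L) L ×ˢ Set.Icc 0 T))
    (hft : ∀ p ∈ Set.Ioo (0:ℝ) 1 ×ˢ Set.Ioo (-L) L ×ˢ Set.Ioo 0 T,
      HasDerivAt (fun t => f (p.1, p.2.1, t)) (ft p) p.2.2)
    (hfx : ∀ p ∈ Set.Ioo (0:ℝ) 1 ×ˢ Set.Ioo (-L) L ×ˢ Set.Ioo 0 T,
      HasDerivAt (fun x => f (x, p.2.1, p.2.2)) (fx p) p.1)
    (hfv : ∀ p ∈ Set.Ioo (0:ℝ) 1 ×ˢ Set.Ioo (-L) L ×ˢ Set.Ioo 0 T,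
      HasDerivAt (fun v => f (p.1, v, p.2.2)) (fv p) p.2.1)
    (hfvv : ∀ p ∈ Set.Ioo (0:ℝ) 1 ×ˢ Set.Ioo (-L) L ×ˢ Set.Ioo 0 T,
      HasDerivAt (fun v => fv (p.1, v, p.2.2)) (fvv p) p.2.1)
    (hsub : ∀ p ∈ Set.Ioo (0:ℝ) 1 ×ˢ Set.Ioo (-L) L ×ˢ Set.Ioo 0 T,
      ft p + p.2.1 * fx p - fvv p ≤ 0) :
    ∃ p ∈ (Set.Icc 0 1 ×ˢ Set.Icc (-L) L ×ˢ Set.Icc 0 T) ∩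
        {q : ℝ × ℝ × ℝ | q.2.2 = 0 ∨ (q.1 = 0 ∧ 0 ≤ q.2.1) ∨ (q.1 = 1 ∧ q.2.1 ≤ 0) ∨
          q.2.1 = L ∨ q.2.1 = -L},
      IsMaxOn f (Set.Icc 0 1 ×ˢ Set.Icc (-L) L ×ˢ Set.Icc 0 T) p := by
  classical
  set K : Set (ℝ × ℝ × ℝ) := Set.Icc 0 1 ×ˢ Set.Icc (-L) L ×ˢ Set.Icc 0 T with hKdef
  set a : ℕ → ℝ := fun n => min 1 T / ((n:ℝ) + 4) with hadef
  set ε : ℕ → ℝ := fun n => 1 / ((n:ℝ) + 1) with hεdef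
  have han4 : ∀ n : ℕ, (0:ℝ) < (n:ℝ) + 4 := fun n => by positivity
  have hm : 0 < min 1 T := lt_min one_pos hT
  have ha0 : ∀ n, 0 < a n := fun n => div_pos hm (han4 n)
  have ha1 : ∀ n, a n < 1/2 := by
    intro n
    rw [hadef]
    rw [div_lt_iff₀ (han4 n)]
    have := min_le_left 1 T
    have : (0:ℝ) ≤ (n:ℝ) := Nat.cast_nonneg n
    nlinarith [min_le_left 1 T]
  have haT : ∀ n, a n < T := by
    intro n
    rw [hadef, div_lt_iff₀ (han4 n)]
    nlinarith [min_le_right 1 T, mul_nonneg hT.le (Nat.cast_nonneg n : (0:ℝ) ≤ (n:ℝ))]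
  have hε0 : ∀ n, 0 < ε n := fun n => by rw [hεdef]; positivity
  have hatend : Tendsto a atTop (𝓝 0) :=
    Tendsto.div_atTop tendsto_const_nhds
      (tendsto_atTop_add_const_right _ 4 tendsto_natCast_atTop_atTop)
  have hεtend : Tendsto ε atTop (𝓝 0) :=
    Tendsto.div_atTop tendsto_const_nhds
      (tendsto_atTop_add_const_right _ 1 tendsto_natCast_atTop_atTop)
  -- apply the core lemma for each n
  have H : ∀ n : ℕ, ∃ p ∈ Set.Icc (a n) (1 - a n) ×ˢ Set.Icc (-L) L ×ˢ Set.Icc 0 (T - a n),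
      IsMaxOn (fun q => f q - ε n * q.2.2)
        (Set.Icc (a n) (1 - a n) ×ˢ Set.Icc (-L) L ×ˢ Set.Icc 0 (T - a n)) p ∧
      (p.2.2 = 0 ∨ (p.1 = a n ∧ 0 ≤ p.2.1) ∨ (p.1 = 1 - a n ∧ p.2.1 ≤ 0) ∨
        p.2.1 = L ∨ p.2.1 = -L) := fun n =>
    kfp_core L T hL hT f ft fx fv fvv hcont hft hfx hfv hfvv hsub (a n) (ε n)
      (ha0 n) (ha1 n) (haT n) (hε0 n)
  choose p hpK hpmax hpgood using H
  have hKn_sub : ∀ n, Set.Icc (a n) (1 - a n) ×ˢ Set.Icc (-L) L ×ˢ Set.Icc 0 (T - a n) ⊆ K := by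
    intro n
    exact Set.prod_mono (Set.Icc_subset_Icc (ha0 n).le (by linarith [ha0 n]))
      (Set.prod_mono subset_rfl (Set.Icc_subset_Icc le_rfl (by linarith [ha0 n])))
  have hpKm : ∀ n, p n ∈ K := fun n => hKn_sub n (hpK n)
  have hKcomp : IsCompact K := isCompact_Icc.prod (isCompact_Icc.prod isCompact_Icc)
  obtain ⟨pl, hplK, φ, hφ, hconv⟩ := hKcomp.tendsto_subseq hpKm
  have haφ : Tendsto (fun n => a (φ n)) atTop (𝓝 0) := hatend.comp hφ.tendsto_atTop
  have hεφ : Tendsto (fun n => ε (φ n)) atTop (𝓝 0) := hεtend.comp hφ.tendsto_atTop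
  have hconvx : Tendsto (fun n => (p (φ n)).1) atTop (𝓝 pl.1) :=
    (continuous_fst.tendsto pl).comp hconv
  have hconvv : Tendsto (fun n => (p (φ n)).2.1) atTop (𝓝 pl.2.1) :=
    ((continuous_fst.comp continuous_snd).tendsto pl).comp hconv
  have hconvt : Tendsto (fun n => (p (φ n)).2.2) atTop (𝓝 pl.2.2) :=
    ((continuous_snd.comp continuous_snd).tendsto pl).comp hconv
  -- the limit point is in the good set
  have hgood : pl.2.2 = 0 ∨ (pl.1 = 0 ∧ 0 ≤ pl.2.1) ∨ (pl.1 = 1 ∧ pl.2.1 ≤ 0) ∨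
      pl.2.1 = L ∨ pl.2.1 = -L := by
    have hfreq := (Filter.Eventually.of_forall (fun n => hpgood (φ n))).frequently
      (f := (atTop : Filter ℕ))
    rcases Filter.frequently_or_distrib.mp hfreq with h1 | hrest
    · left
      have : pl.2.2 ∈ closure ({0} : Set ℝ) :=
        mem_closure_of_frequently_of_tendsto (h1.mono fun n hn => by simpa using hn) hconvt
      simpa using this
    rcases Filter.frequently_or_distrib.mp hrest with h2 | hrest
    · right; left
      have hu : Tendsto (fun n => ((p (φ n)).1 - a (φ n), (p (φ n)).2.1)) atTop
          (𝓝 (pl.1 - 0, pl.2.1)) := (hconvx.sub haφ).prodMk_nhds hconvv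
      have hC : IsClosed {z : ℝ × ℝ | z.1 = 0 ∧ 0 ≤ z.2} :=
        (isClosed_eq continuous_fst continuous_const).inter
          (isClosed_le continuous_const continuous_snd)
      have hmem : (pl.1 - 0, pl.2.1) ∈ {z : ℝ × ℝ | z.1 = 0 ∧ 0 ≤ z.2} := by
        rw [← hC.closure_eq]
        exact mem_closure_of_frequently_of_tendsto
          (h2.mono fun n hn => ⟨sub_eq_zero.mpr hn.1, hn.2⟩) hu
      exact ⟨by simpa [sub_eq_zero] using hmem.1, hmem.2⟩
    rcases Filter.frequently_or_distrib.mp hrest with h3 | hrest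
    · right; right; left
      have hu : Tendsto (fun n => ((p (φ n)).1 - (1 - a (φ n)), (p (φ n)).2.1)) atTop
          (𝓝 (pl.1 - (1 - 0), pl.2.1)) :=
        (hconvx.sub (tendsto_const_nhds.sub haφ)).prodMk_nhds hconvv
      have hC : IsClosed {z : ℝ × ℝ | z.1 = 0 ∧ z.2 ≤ 0} :=
        (isClosed_eq continuous_fst continuous_const).inter
          (isClosed_le continuous_snd continuous_const)
      have hmem : (pl.1 - (1 - 0), pl.2.1) ∈ {z : ℝ × ℝ | z.1 = 0 ∧ z.2 ≤ 0} := by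
        rw [← hC.closure_eq]
        exact mem_closure_of_frequently_of_tendsto
          (h3.mono fun n hn => ⟨sub_eq_zero.mpr hn.1, hn.2⟩) hu
      have h1 : pl.1 - (1 - 0) = 0 := hmem.1
      exact ⟨by linarith [h1], hmem.2⟩
    rcases Filter.frequently_or_distrib.mp hrest with h4 | h5
    · right; right; right; left
      have : pl.2.1 ∈ closure ({L} : Set ℝ) :=
        mem_closure_of_frequently_of_tendsto (h4.mono fun n hn => by simpa using hn) hconvv
      simpa using this
    · right; right; right; right
      have : pl.2.1 ∈ closure ({-L} : Set ℝ) :=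
        mem_closure_of_frequently_of_tendsto (h5.mono fun n hn => by simpa using hn) hconvv
      simpa using this
  -- the limit point is a maximum point
  have hmaxf : ∀ q ∈ K, f q ≤ f pl := by
    rintro ⟨qx, qv, qt⟩ hq
    obtain ⟨⟨hqx0, hqx1⟩, ⟨hqv0, hqv1⟩, hqt0, hqt1⟩ := hq
    dsimp only at hqx0 hqx1 hqv0 hqv1 hqt0 hqt1
    set w : ℕ → ℝ × ℝ × ℝ := fun n =>
      ((1 - 2 * a (φ n)) * qx + a (φ n), qv, (1 - a (φ n) / T) * qt) with hwdef
    have hwK : ∀ n, w n ∈ Set.Icc (a (φ n)) (1 - a (φ n)) ×ˢ Set.Icc (-L) L ×ˢ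
        Set.Icc 0 (T - a (φ n)) := by
      intro n
      show ((1 - 2 * a (φ n)) * qx + a (φ n), qv, (1 - a (φ n) / T) * qt) ∈ _
      have h1 : (0:ℝ) ≤ 1 - 2 * a (φ n) := by linarith [ha1 (φ n)]
      have h2 : 0 < a (φ n) := ha0 (φ n)
      have h3 : a (φ n) / T ≤ 1 := (div_le_one hT).mpr (haT (φ n)).le
      have h4 : (0:ℝ) ≤ 1 - a (φ n) / T := by linarith
      refine ⟨⟨?_, ?_⟩, ⟨hqv0, hqv1⟩, ?_, ?_⟩
      · nlinarith
      · nlinarith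
      · exact mul_nonneg h4 hqt0
      · calc (1 - a (φ n) / T) * qt ≤ (1 - a (φ n) / T) * T :=
              mul_le_mul_of_nonneg_left hqt1 h4
          _ = T - a (φ n) := by field_simp
    have hwtend : Tendsto w atTop (𝓝 (qx, qv, qt)) := by
      have hone : Tendsto (fun _ : ℕ => (1:ℝ)) atTop (𝓝 1) := tendsto_const_nhds
      have h1 : Tendsto (fun n => 1 - 2 * a (φ n)) atTop (𝓝 1) := by
        simpa using hone.sub (haφ.const_mul 2)
      have hx : Tendsto (fun n => (1 - 2 * a (φ n)) * qx + a (φ n)) atTop (𝓝 qx) := by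
        simpa using (h1.mul (tendsto_const_nhds : Tendsto (fun _ : ℕ => qx) atTop (𝓝 qx))).add haφ
      have h2 : Tendsto (fun n => 1 - a (φ n) / T) atTop (𝓝 1) := by
        simpa using hone.sub (haφ.div_const T)
      have htt : Tendsto (fun n => (1 - a (φ n) / T) * qt) atTop (𝓝 qt) := by
        simpa using h2.mul (tendsto_const_nhds : Tendsto (fun _ : ℕ => qt) atTop (𝓝 qt))
      exact hx.prodMk_nhds ((tendsto_const_nhds).prodMk_nhds htt)
    have hwKm : ∀ n, w n ∈ K := fun n => hKn_sub (φ n) (hwK n)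
    have hfw : Tendsto (fun n => f (w n)) atTop (𝓝 (f (qx, qv, qt))) :=
      (hcont _ ⟨⟨hqx0, hqx1⟩, ⟨hqv0, hqv1⟩, hqt0, hqt1⟩).tendsto.comp
        (tendsto_nhdsWithin_of_tendsto_nhds_of_eventually_within w hwtend
          (Filter.Eventually.of_forall hwKm))
    have hfp : Tendsto (fun n => f (p (φ n))) atTop (𝓝 (f pl)) :=
      (hcont _ hplK).tendsto.comp
        (tendsto_nhdsWithin_of_tendsto_nhds_of_eventually_within _ hconv
          (Filter.Eventually.of_forall fun n => hpKm (φ n)))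
    have hwt : Tendsto (fun n => (w n).2.2) atTop (𝓝 qt) :=
      ((continuous_snd.comp continuous_snd).tendsto _).comp hwtend
    have hA : Tendsto (fun n => f (w n) - ε (φ n) * (w n).2.2) atTop
        (𝓝 (f (qx, qv, qt))) := by
      have := hfw.sub (hεφ.mul hwt)
      simpa using this
    have hB : Tendsto (fun n => f (p (φ n)) - ε (φ n) * (p (φ n)).2.2) atTop
        (𝓝 (f pl)) := by
      have := hfp.sub (hεφ.mul hconvt)
      simpa using this
    refine le_of_tendsto_of_tendsto' hA hB ?_
    intro n
    exact hpmax (φ n) (hwK n)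
  exact ⟨pl, ⟨hplK, hgood⟩, isMaxOn_iff.mpr hmaxf⟩
end

section
/- Suppose $f \in C^{1,2,1}_{x,v,t}(U_T) \cap C(\overline{U_T})$, with $U_T = (0,1)\times\mathbb{R}\times(0,T)$, satisfies $f_t + v f_x - f_{vv} \le 0$, is bounded, and for each $w \in \mathbb{R}$ and $\lambda > 0$ one has the bounded-domain maximum principle available for $g = f - \lambda(1 + |v-w|^2)e^{2t}$. Then $\sup_{U_T} f \le \sup_{\Gamma_T^-} f$, where $\Gamma_T^- = (\Omega \times \{t=0\}) \cup (\{x=0\}\times(0,\infty)\times(0,T)) \cup (\{x=1\}\times(-\infty,0)\times(0,T))$. -/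
open Set Real Filter Topology

private def Gam (T : ℝ) : Set (ℝ × ℝ × ℝ) :=
  (Set.Icc (0:ℝ) 1 ×ˢ (Set.univ : Set ℝ) ×ˢ {(0:ℝ)}) ∪
  ({(0:ℝ)} ×ˢ Set.Ioi (0:ℝ) ×ˢ Set.Ioo 0 T) ∪
  ({(1:ℝ)} ×ˢ Set.Iio (0:ℝ) ×ˢ Set.Ioo 0 T)

lemma aux_le (T : ℝ) (hT : 0 < T) (f : ℝ × ℝ × ℝ → ℝ)
    (hcont : ContinuousOn f (Set.Icc 0 1 ×ˢ (Set.univ : Set ℝ) ×ˢ Set.Icc 0 T))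
    (hbdd : BddAbove (f '' Gam T))
    (q : ℝ × ℝ × ℝ) (hq : q ∈ Set.Icc (0:ℝ) 1 ×ˢ (Set.univ : Set ℝ) ×ˢ Set.Icc 0 T)
    (hcase : q.2.2 = 0 ∨ (q.1 = 0 ∧ 0 ≤ q.2.1) ∨ (q.1 = 1 ∧ q.2.1 ≤ 0)) :
    f q ≤ sSup (f '' Gam T) := by
  obtain ⟨x, v, t⟩ := q
  obtain ⟨hx, -, ht⟩ := hq
  simp only at hx ht hcase ⊢
  by_cases ht0 : t = 0
  · subst ht0
    exact le_csSup hbdd ⟨(x, v, 0), Or.inl (Or.inl ⟨hx, trivial, rfl⟩), rfl⟩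
  have htpos : 0 < t := lt_of_le_of_ne ht.1 (Ne.symm ht0)
  rcases hcase with h0 | ⟨hx0, hv0⟩ | ⟨hx1, hv1⟩
  · exact absurd h0 ht0
  · subst hx0
    set φ : ℝ → ℝ × ℝ × ℝ := fun s => (0, v + s, t * (1 - s / T)) with hφ
    have hφc : Continuous φ := by fun_prop
    have hφ0 : φ 0 = (0, v, t) := by simp [hφ]
    have htend : Tendsto φ (𝓝[>] (0:ℝ)) (𝓝 (0, v, t)) := by
      have := hφc.tendsto 0
      rw [hφ0] at this
      exact this.mono_left nhdsWithin_le_nhds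
    have hmem : ∀ᶠ s in 𝓝[>] (0:ℝ), s ∈ Set.Ioo 0 T := by
      filter_upwards [eventually_mem_nhdsWithin,
        eventually_nhdsWithin_of_eventually_nhds (eventually_lt_nhds hT)] with s h1 h2
      exact ⟨h1, h2⟩
    have hin : ∀ᶠ s in 𝓝[>] (0:ℝ), φ s ∈ Gam T ∩
        (Set.Icc (0:ℝ) 1 ×ˢ (Set.univ : Set ℝ) ×ˢ Set.Icc 0 T) := by
      filter_upwards [hmem] with s hs
      have h1 : 0 < t * (1 - s / T) := by
        have : 0 < 1 - s / T := by
          have := (div_lt_one hT).2 hs.2; linarith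
        positivity
      have h2 : t * (1 - s / T) < T := by
        have hs' : 0 < s / T := div_pos hs.1 hT
        nlinarith [ht.2, hs.1]
      refine ⟨Or.inl (Or.inr ⟨rfl, by simpa using lt_of_lt_of_le hs.1 (by linarith), h1, h2⟩), ?_⟩
      exact ⟨⟨le_refl 0, zero_le_one⟩, trivial, le_of_lt h1, le_of_lt h2⟩
    have hcw : Tendsto f (𝓝[Set.Icc (0:ℝ) 1 ×ˢ (Set.univ : Set ℝ) ×ˢ Set.Icc 0 T] (0, v, t))
        (𝓝 (f (0, v, t))) := hcont.continuousWithinAt ⟨⟨le_refl 0, zero_le_one⟩, trivial, ht⟩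
    have hcomp : Tendsto (fun s => f (φ s)) (𝓝[>] (0:ℝ)) (𝓝 (f (0, v, t))) := by
      apply hcw.comp
      rw [tendsto_nhdsWithin_iff]
      exact ⟨htend, hin.mono fun s h => h.2⟩
    refine le_of_tendsto hcomp ?_
    filter_upwards [hin] with s hs
    exact le_csSup hbdd ⟨φ s, hs.1, rfl⟩
  · subst hx1
    set φ : ℝ → ℝ × ℝ × ℝ := fun s => (1, v - s, t * (1 - s / T)) with hφ
    have hφc : Continuous φ := by fun_prop
    have hφ0 : φ 0 = (1, v, t) := by simp [hφ]
    have htend : Tendsto φ (𝓝[>] (0:ℝ)) (𝓝 (1, v, t)) := by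
      have := hφc.tendsto 0
      rw [hφ0] at this
      exact this.mono_left nhdsWithin_le_nhds
    have hmem : ∀ᶠ s in 𝓝[>] (0:ℝ), s ∈ Set.Ioo 0 T := by
      filter_upwards [eventually_mem_nhdsWithin,
        eventually_nhdsWithin_of_eventually_nhds (eventually_lt_nhds hT)] with s h1 h2
      exact ⟨h1, h2⟩
    have hin : ∀ᶠ s in 𝓝[>] (0:ℝ), φ s ∈ Gam T ∩
        (Set.Icc (0:ℝ) 1 ×ˢ (Set.univ : Set ℝ) ×ˢ Set.Icc 0 T) := by
      filter_upwards [hmem] with s hs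
      have h1 : 0 < t * (1 - s / T) := by
        have : 0 < 1 - s / T := by
          have := (div_lt_one hT).2 hs.2; linarith
        positivity
      have h2 : t * (1 - s / T) < T := by
        have hs' : 0 < s / T := div_pos hs.1 hT
        nlinarith [ht.2, hs.1]
      refine ⟨Or.inr ⟨rfl, show v - s ∈ Set.Iio (0:ℝ) by simp; linarith [hs.1], h1, h2⟩, ?_⟩
      exact ⟨⟨zero_le_one, le_refl 1⟩, trivial, le_of_lt h1, le_of_lt h2⟩
    have hcw : Tendsto f (𝓝[Set.Icc (0:ℝ) 1 ×ˢ (Set.univ : Set ℝ) ×ˢ Set.Icc 0 T] (1, v, t))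
        (𝓝 (f (1, v, t))) := hcont.continuousWithinAt ⟨⟨zero_le_one, le_refl 1⟩, trivial, ht⟩
    have hcomp : Tendsto (fun s => f (φ s)) (𝓝[>] (0:ℝ)) (𝓝 (f (1, v, t))) := by
      apply hcw.comp
      rw [tendsto_nhdsWithin_iff]
      exact ⟨htend, hin.mono fun s h => h.2⟩
    refine le_of_tendsto hcomp ?_
    filter_upwards [hin] with s hs
    exact le_csSup hbdd ⟨φ s, hs.1, rfl⟩

/-- Maximum principle on the velocity-unbounded slab via barrier functions:
if `f` is a bounded subsolution of `𝓜 f = f_t + v f_x - f_vv ≤ 0` on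
`U_T = (0,1) × ℝ × (0,T)` and the bounded-domain maximum principle is available
for `g = f - λ (1 + |v-w|²) e^{2t}`, then `sup_{U_T} f ≤ sup_{Γ_T⁻} f`. -/
theorem stmt_8 (T : ℝ) (hT : 0 < T)
    (f ft fx fv fvv : ℝ × ℝ × ℝ → ℝ)
    (hcont : ContinuousOn f (Set.Icc 0 1 ×ˢ (Set.univ : Set ℝ) ×ˢ Set.Icc 0 T))
    (hbdd : ∃ B : ℝ, ∀ p : ℝ × ℝ × ℝ, |f p| ≤ B)
    (hft : ∀ p ∈ Set.Ioo (0:ℝ) 1 ×ˢ (Set.univ : Set ℝ) ×ˢ Set.Ioo 0 T,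
      HasDerivAt (fun t => f (p.1, p.2.1, t)) (ft p) p.2.2)
    (hfx : ∀ p ∈ Set.Ioo (0:ℝ) 1 ×ˢ (Set.univ : Set ℝ) ×ˢ Set.Ioo 0 T,
      HasDerivAt (fun x => f (x, p.2.1, p.2.2)) (fx p) p.1)
    (hfv : ∀ p ∈ Set.Ioo (0:ℝ) 1 ×ˢ (Set.univ : Set ℝ) ×ˢ Set.Ioo 0 T,
      HasDerivAt (fun v => f (p.1, v, p.2.2)) (fv p) p.2.1)
    (hfvv : ∀ p ∈ Set.Ioo (0:ℝ) 1 ×ˢ (Set.univ : Set ℝ) ×ˢ Set.Ioo 0 T,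
      HasDerivAt (fun v => fv (p.1, v, p.2.2)) (fvv p) p.2.1)
    (hsub : ∀ p ∈ Set.Ioo (0:ℝ) 1 ×ˢ (Set.univ : Set ℝ) ×ˢ Set.Ioo 0 T,
      ft p + p.2.1 * fx p - fvv p ≤ 0)
    -- bounded-domain maximum principle for `g = f - λ (1 + |v-w|²) e^{2t}`
    (hMP : ∀ w lam r : ℝ, 0 < lam → 0 < r →
      ∀ p ∈ Set.Icc (0:ℝ) 1 ×ˢ Set.Icc (w - r) (w + r) ×ˢ Set.Icc 0 T,
        (fun q : ℝ × ℝ × ℝ => f q - lam * (1 + |q.2.1 - w| ^ 2) * Real.exp (2 * q.2.2)) p ≤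
          sSup ((fun q : ℝ × ℝ × ℝ =>
              f q - lam * (1 + |q.2.1 - w| ^ 2) * Real.exp (2 * q.2.2)) ''
            ((Set.Icc (0:ℝ) 1 ×ˢ Set.Icc (w - r) (w + r) ×ˢ Set.Icc 0 T) ∩
              {q : ℝ × ℝ × ℝ | q.2.2 = 0 ∨ (q.1 = 0 ∧ 0 ≤ q.2.1) ∨ (q.1 = 1 ∧ q.2.1 ≤ 0) ∨
                q.2.1 = w - r ∨ q.2.1 = w + r}))) :
    ∀ p ∈ Set.Icc (0:ℝ) 1 ×ˢ (Set.univ : Set ℝ) ×ˢ Set.Icc 0 T,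
      f p ≤ sSup (f '' ((Set.Icc (0:ℝ) 1 ×ˢ (Set.univ : Set ℝ) ×ˢ {(0:ℝ)}) ∪
        ({(0:ℝ)} ×ˢ Set.Ioi (0:ℝ) ×ˢ Set.Ioo 0 T) ∪
        ({(1:ℝ)} ×ˢ Set.Iio (0:ℝ) ×ˢ Set.Ioo 0 T))) := by
  obtain ⟨B, hB⟩ := hbdd
  intro p hp
  show f p ≤ sSup (f '' Gam T)
  have hbddA : BddAbove (f '' Gam T) := ⟨B, by rintro y ⟨q, -, rfl⟩; exact (abs_le.1 (hB q)).2⟩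
  set S := sSup (f '' Gam T) with hS
  obtain ⟨x, v, t⟩ := p
  obtain ⟨hx, -, ht⟩ := hp
  simp only at hx ht ⊢
  refine le_of_forall_pos_le_add fun ε hε => ?_
  set lam : ℝ := ε * Real.exp (-(2 * T)) with hlamdef
  have hlam : 0 < lam := by positivity
  set m : ℝ := max 0 ((B - S) / lam) with hm
  set r : ℝ := 1 + Real.sqrt m with hr
  have hrpos : 0 < r := by positivity
  have hmr : m ≤ r ^ 2 := by
    nlinarith [Real.sq_sqrt (le_max_left 0 ((B - S) / lam)), Real.sqrt_nonneg m]
  have hBS : B - S ≤ lam * m := by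
    rcases le_total (B - S) 0 with h | h
    · exact h.trans (by positivity)
    · rw [hm, max_eq_right (by positivity)]
      rw [mul_div_cancel₀ _ (ne_of_gt hlam)]
  have hbar : B - S ≤ lam * (1 + r ^ 2) := by nlinarith
  have key := hMP v lam r hlam hrpos (x, v, t)
    ⟨hx, ⟨by linarith, by linarith⟩, ht⟩
  simp only [sub_self, abs_zero] at key
  have hsup : sSup ((fun q : ℝ × ℝ × ℝ =>
      f q - lam * (1 + |q.2.1 - v| ^ 2) * Real.exp (2 * q.2.2)) ''
      ((Set.Icc (0:ℝ) 1 ×ˢ Set.Icc (v - r) (v + r) ×ˢ Set.Icc 0 T) ∩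
        {q : ℝ × ℝ × ℝ | q.2.2 = 0 ∨ (q.1 = 0 ∧ 0 ≤ q.2.1) ∨ (q.1 = 1 ∧ q.2.1 ≤ 0) ∨
          q.2.1 = v - r ∨ q.2.1 = v + r})) ≤ S := by
    refine csSup_le ⟨_, ⟨(0, v, 0), ⟨⟨⟨le_refl 0, zero_le_one⟩,
      ⟨by linarith, by linarith⟩, ⟨le_refl 0, le_of_lt hT⟩⟩, Or.inl rfl⟩, rfl⟩⟩ ?_
    rintro y ⟨q, ⟨⟨hq1, hq2, hq3⟩, hqc⟩, rfl⟩
    show f q - lam * (1 + |q.2.1 - v| ^ 2) * Real.exp (2 * q.2.2) ≤ S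
    have hexp : 1 ≤ Real.exp (2 * q.2.2) := Real.one_le_exp (by linarith [hq3.1])
    have hfq : f q ≤ B := (abs_le.1 (hB q)).2
    rcases hqc with h | h | h | h | h
    · have := aux_le T hT f hcont hbddA q ⟨hq1, trivial, hq3⟩ (Or.inl h)
      have hpos : 0 ≤ lam * (1 + |q.2.1 - v| ^ 2) * Real.exp (2 * q.2.2) := by positivity
      linarith
    · have := aux_le T hT f hcont hbddA q ⟨hq1, trivial, hq3⟩ (Or.inr (Or.inl h))
      have hpos : 0 ≤ lam * (1 + |q.2.1 - v| ^ 2) * Real.exp (2 * q.2.2) := by positivity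
      linarith
    · have := aux_le T hT f hcont hbddA q ⟨hq1, trivial, hq3⟩ (Or.inr (Or.inr h))
      have hpos : 0 ≤ lam * (1 + |q.2.1 - v| ^ 2) * Real.exp (2 * q.2.2) := by positivity
      linarith
    · have habs : |q.2.1 - v| = r := by rw [h]; rw [show v - r - v = -r by ring, abs_neg,
        abs_of_pos hrpos]
      rw [habs]
      have hmono : lam * (1 + r ^ 2) ≤ lam * (1 + r ^ 2) * Real.exp (2 * q.2.2) :=
        le_mul_of_one_le_right (by positivity) hexp
      linarith
    · have habs : |q.2.1 - v| = r := by rw [h]; rw [show v + r - v = r by ring,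
        abs_of_pos hrpos]
      rw [habs]
      have hmono : lam * (1 + r ^ 2) ≤ lam * (1 + r ^ 2) * Real.exp (2 * q.2.2) :=
        le_mul_of_one_le_right (by positivity) hexp
      linarith
  have step : f (x, v, t) ≤ S + lam * Real.exp (2 * t) := by
    have := key.trans hsup
    linarith
  have hle : lam * Real.exp (2 * t) ≤ ε := by
    have h1 : Real.exp (2 * t) ≤ Real.exp (2 * T) :=
      Real.exp_le_exp.2 (by linarith [ht.2])
    have h2 : lam * Real.exp (2 * T) = ε := by
      rw [hlamdef, Real.exp_neg, mul_assoc, inv_mul_cancel₀ (ne_of_gt (Real.exp_pos _)), mul_one]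
    nlinarith [Real.exp_pos (2 * t)]
  linarith
end

section
/- Let $\alpha \in \mathbb{R}$ and suppose $F(x,v) = x^{\alpha}\,\Phi\left(-\frac{v^3}{9x}\right)$ for $x>0$, where $\Phi$ is a $C^2$ function. Then $F$ satisfies the steady Fokker–Planck equation $v F_x = F_{vv}$ on $\{x > 0\}$ if and only if $\Phi = \Phi(z)$ satisfies Kummer's equation $z\Phi_{zz} + (\tfrac{2}{3} - z)\Phi_z + \alpha\,\Phi = 0$ at $z = -\frac{v^3}{9x}$. -/
section aux
variable (α : ℝ) (Φ : ℝ → ℝ)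

lemma aux_inner_x (v x : ℝ) (hx : x ≠ 0) :
    HasDerivAt (fun x' : ℝ => -(v ^ 3) / (9 * x')) (v ^ 3 / (9 * x ^ 2)) x := by
  have h : HasDerivAt (fun x' : ℝ => (-(v ^ 3) / 9) * x'⁻¹)
      ((-(v ^ 3) / 9) * (-(x ^ 2)⁻¹)) x := (hasDerivAt_inv hx).const_mul _
  have h2 : (fun x' : ℝ => -(v ^ 3) / (9 * x')) = fun x' : ℝ => (-(v ^ 3) / 9) * x'⁻¹ := by
    funext x'; field_simp
  rw [h2]
  convert h using 1
  field_simp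

lemma aux_inner_v (v x : ℝ) :
    HasDerivAt (fun v' : ℝ => -(v' ^ 3) / (9 * x)) (-(3 * v ^ 2) / (9 * x)) v := by
  have h : HasDerivAt (fun v' : ℝ => -(v' ^ 3) / (9 * x)) (-(↑3 * v ^ (3 - 1)) / (9 * x)) v :=
    ((hasDerivAt_pow 3 v).neg.div_const (9 * x))
  convert h using 1

lemma aux_derivx (hΦ : ContDiff ℝ 2 Φ) (x v : ℝ) (hx : 0 < x) :
    deriv (fun x' => x' ^ α * Φ (-(v ^ 3) / (9 * x'))) x
      = x ^ (α - 1) * (α * Φ (-(v ^ 3) / (9 * x))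
          - (-(v ^ 3) / (9 * x)) * deriv Φ (-(v ^ 3) / (9 * x))) := by
  have hd : Differentiable ℝ Φ := hΦ.differentiable (by norm_num)
  set z := -(v ^ 3) / (9 * x) with hz
  have h1 : HasDerivAt (fun x' : ℝ => x' ^ α) (α * x ^ (α - 1)) x :=
    Real.hasDerivAt_rpow_const (Or.inl hx.ne')
  have h2 : HasDerivAt (fun x' : ℝ => Φ (-(v ^ 3) / (9 * x')))
      (deriv Φ z * (v ^ 3 / (9 * x ^ 2))) x :=
    (hd z).hasDerivAt.comp x (aux_inner_x v x hx.ne')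
  have h3 : deriv (fun x' => x' ^ α * Φ (-(v ^ 3) / (9 * x'))) x = _ := (h1.mul h2).deriv
  rw [h3]
  have hxa : x ^ α = x ^ (α - 1) * x := by
    rw [← Real.rpow_add_one hx.ne']; ring_nf
  rw [hxa, hz]
  field_simp
  ring

lemma aux_derivvv (hΦ : ContDiff ℝ 2 Φ) (x v : ℝ) (hx : 0 < x) :
    deriv (deriv (fun v' => x ^ α * Φ (-(v' ^ 3) / (9 * x)))) v
      = x ^ (α - 1) * (-(2 * v / 3) * deriv Φ (-(v ^ 3) / (9 * x))
          - v * (-(v ^ 3) / (9 * x)) * deriv (deriv Φ) (-(v ^ 3) / (9 * x))) := by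
  have hd : Differentiable ℝ Φ := hΦ.differentiable (by norm_num)
  have hΦ1 : ContDiff ℝ 1 (deriv Φ) := by
    have h : ContDiff ℝ ((1 : ℕ) + 1) Φ := by exact_mod_cast hΦ
    exact (contDiff_succ_iff_deriv.mp h).2.2
  have hd1 : Differentiable ℝ (deriv Φ) := hΦ1.differentiable one_ne_zero
  have hderiv : deriv (fun v' => x ^ α * Φ (-(v' ^ 3) / (9 * x)))
      = fun w => x ^ α * (deriv Φ (-(w ^ 3) / (9 * x)) * (-(3 * w ^ 2) / (9 * x))) := by
    funext w
    exact (((hd _).hasDerivAt.comp w (aux_inner_v w x)).const_mul (x ^ α)).deriv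
  rw [hderiv]
  set z := -(v ^ 3) / (9 * x) with hz
  have h4 : HasDerivAt (fun w : ℝ => deriv Φ (-(w ^ 3) / (9 * x)))
      (deriv (deriv Φ) z * (-(3 * v ^ 2) / (9 * x))) v :=
    by have := (hd1 z).hasDerivAt.comp v (aux_inner_v v x); exact this
  have h5 : HasDerivAt (fun w : ℝ => -(3 * w ^ 2) / (9 * x)) (-(3 * (2 * v)) / (9 * x)) v := by
    have : HasDerivAt (fun w : ℝ => -(3 * w ^ 2) / (9 * x)) (-(3 * (↑2 * v ^ (2 - 1))) / (9 * x)) v :=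
      (((hasDerivAt_pow 2 v).const_mul (3:ℝ)).neg.div_const (9 * x))
    convert this using 1
    all_goals norm_num
  have h6 : deriv (fun w => x ^ α * (deriv Φ (-(w ^ 3) / (9 * x)) * (-(3 * w ^ 2) / (9 * x)))) v = _ :=
    ((h4.mul h5).const_mul (x ^ α)).deriv
  rw [h6]
  have hxa : x ^ α = x ^ (α - 1) * x := by
    rw [← Real.rpow_add_one hx.ne']; ring_nf
  rw [hxa, hz]
  field_simp
  ring
end aux


/-- Self-similar reduction of the stationary kinetic Fokker–Planck equation:
`F(x,v) = x^α Φ(-v³/(9x))` satisfies `v F_x = F_vv` on `{x > 0}` if and only if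
`Φ` satisfies Kummer's equation `z Φ'' + (2/3 - z) Φ' + α Φ = 0`. -/
theorem stmt_9 (α : ℝ) (Φ : ℝ → ℝ) (hΦ : ContDiff ℝ 2 Φ)
    (F : ℝ → ℝ → ℝ)
    (hF : ∀ x v : ℝ, 0 < x → F x v = x ^ α * Φ (-(v ^ 3) / (9 * x))) :
    (∀ x v : ℝ, 0 < x →
        v * deriv (fun x' => F x' v) x = deriv (deriv (fun v' => F x v')) v) ↔
      (∀ z : ℝ, z * deriv (deriv Φ) z + (2 / 3 - z) * deriv Φ z + α * Φ z = 0) := by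
  -- rewrite the PDE at every point (x,v) with x > 0
  have key : ∀ x v : ℝ, 0 < x →
      (v * deriv (fun x' => F x' v) x = deriv (deriv (fun v' => F x v')) v
        ↔ v * (x ^ (α - 1) * (α * Φ (-(v ^ 3) / (9 * x))
              - (-(v ^ 3) / (9 * x)) * deriv Φ (-(v ^ 3) / (9 * x))))
          = x ^ (α - 1) * (-(2 * v / 3) * deriv Φ (-(v ^ 3) / (9 * x))
              - v * (-(v ^ 3) / (9 * x)) * deriv (deriv Φ) (-(v ^ 3) / (9 * x)))) := by
    intro x v hx
    have e1 : deriv (fun x' => F x' v) x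
        = deriv (fun x' => x' ^ α * Φ (-(v ^ 3) / (9 * x'))) x := by
      apply Filter.EventuallyEq.deriv_eq
      filter_upwards [eventually_gt_nhds hx] with x' hx'
      exact hF x' v hx'
    have e2 : (fun v' => F x v') = fun v' => x ^ α * Φ (-(v' ^ 3) / (9 * x)) := by
      funext v'; exact hF x v' hx
    rw [e1, e2, aux_derivx α Φ hΦ x v hx, aux_derivvv α Φ hΦ x v hx]
  constructor
  · intro h
    -- Kummer holds for z ≠ 0
    have hne : ∀ z : ℝ, z ≠ 0 →
        z * deriv (deriv Φ) z + (2 / 3 - z) * deriv Φ z + α * Φ z = 0 := by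
      intro z hz
      rcases lt_or_gt_of_ne hz with hneg | hpos
      · have hx : (0:ℝ) < -1 / (9 * z) := div_pos_of_neg_of_neg (by norm_num) (by nlinarith)
        have hzz : -((1:ℝ) ^ 3) / (9 * (-1 / (9 * z))) = z := by
          field_simp
        have := (key _ 1 hx).mp (h _ 1 hx)
        rw [hzz] at this
        have hxne : (-1 / (9 * z)) ^ (α - 1) ≠ 0 := (Real.rpow_pos_of_pos hx _).ne'
        have h0 : (-1 / (9 * z)) ^ (α - 1)
            * (z * deriv (deriv Φ) z + (2 / 3 - z) * deriv Φ z + α * Φ z) = 0 := by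
          linear_combination this
        exact (mul_eq_zero.mp h0).resolve_left hxne
      · have hx : (0:ℝ) < 1 / (9 * z) := by positivity
        have hzz : -((-1:ℝ) ^ 3) / (9 * (1 / (9 * z))) = z := by
          field_simp
        have := (key _ (-1) hx).mp (h _ (-1) hx)
        rw [hzz] at this
        have hxne : (1 / (9 * z)) ^ (α - 1) ≠ 0 := (Real.rpow_pos_of_pos hx _).ne'
        have h0 : (1 / (9 * z)) ^ (α - 1)
            * (z * deriv (deriv Φ) z + (2 / 3 - z) * deriv Φ z + α * Φ z) = 0 := by
          linear_combination -this
        exact (mul_eq_zero.mp h0).resolve_left hxne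
    -- extend to z = 0 by continuity
    have hΦ1 : ContDiff ℝ 1 (deriv Φ) := by
      have h : ContDiff ℝ ((1 : ℕ) + 1) Φ := by exact_mod_cast hΦ
      exact (contDiff_succ_iff_deriv.mp h).2.2
    have hc : Continuous (fun z : ℝ =>
        z * deriv (deriv Φ) z + (2 / 3 - z) * deriv Φ z + α * Φ z) := by
      have c2 : Continuous (deriv (deriv Φ)) := (contDiff_one_iff_deriv.mp hΦ1).2
      have c1 : Continuous (deriv Φ) := hΦ1.continuous
      have c0 : Continuous Φ := hΦ.continuous
      fun_prop
    have := Continuous.ext_on (dense_compl_singleton (0:ℝ)) hc continuous_const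
      (fun z hz => hne z hz)
    exact fun z => congrFun this z
  · intro h x v hx
    rw [key x v hx]
    linear_combination (v * x ^ (α - 1)) * h (-(v ^ 3) / (9 * x))
end

section
/- Let $f : \overline{\Omega} \to [0,\infty)$, $\Omega = (0,1)\times\mathbb{R}$, satisfy: (a) $f(x,v) \le C(|x|^{\alpha} + |v|^{3\alpha})$ for $|x| + |v|^3 \le \delta_0^3$ (with $f(0,0)=0$), and (b) the weighted gradient bound $(|x| + |v|^3)|\partial_x f| + (|x|+|v|^3)^{1/3}|\partial_v f| \le C\,(|x|+|v|^3)^{\alpha}$ whenever $0 < |x| + |v|^3 \le \delta_0^3$, where $0 < \alpha < 1/6$. Then $f$ is Hölder continuous near $(0,0)$: there is a constant $C' > 0$ such that $|f(x_1,v_1) - f(x_2,v_2)| \le C'(|x_1 - x_2|^{\alpha} + |v_1 - v_2|^{3\alpha})$ for all $(x_1,v_1),(x_2,v_2)$ with $|x_i| + |v_i|^3 \le \delta_0^3$. -/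
open Set NNReal

lemma hc_rpow_add_le (a b p : ℝ) (ha : 0 ≤ a) (hb : 0 ≤ b) (hp : 0 ≤ p) (hp1 : p ≤ 1) :
    (a + b) ^ p ≤ a ^ p + b ^ p := by
  have h := NNReal.rpow_add_le_add_rpow a.toNNReal b.toNNReal hp hp1
  have h2 : (((a.toNNReal + b.toNNReal) ^ p : ℝ≥0) : ℝ) ≤
      ((a.toNNReal ^ p + b.toNNReal ^ p : ℝ≥0) : ℝ) := NNReal.coe_le_coe.2 h
  simpa [NNReal.coe_rpow, Real.coe_toNNReal, ha, hb] using h2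

lemma hc_uIcc_abs_sub_le {v a b : ℝ} (hv : v ∈ Set.uIcc a b) : |v - a| ≤ |b - a| := by
  rcases le_total a b with h | h
  · rw [Set.uIcc_of_le h] at hv
    rw [abs_of_nonneg (by linarith [hv.1]), abs_of_nonneg (by linarith)]
    linarith [hv.2]
  · rw [Set.uIcc_of_ge h] at hv
    rw [abs_of_nonpos (by linarith [hv.2]), abs_of_nonpos (by linarith)]
    linarith [hv.1]

lemma hc_uIcc_abs_le {v a b : ℝ} (hv : v ∈ Set.uIcc a b) : |v| ≤ max |a| |b| := by
  rcases le_total a b with h | h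
  · rw [Set.uIcc_of_le h] at hv
    rw [abs_le]
    constructor
    · calc -(max |a| |b|) ≤ -|a| := by simp [le_max_left]
        _ ≤ a := neg_abs_le a
        _ ≤ v := hv.1
    · exact hv.2.trans ((le_abs_self b).trans (le_max_right _ _))
  · rw [Set.uIcc_of_ge h] at hv
    rw [abs_le]
    constructor
    · calc -(max |a| |b|) ≤ -|b| := by simp [le_max_right]
        _ ≤ b := neg_abs_le b
        _ ≤ v := hv.1
    · exact hv.2.trans ((le_abs_self a).trans (le_max_left _ _))

lemma hc_cube4 {a b : ℝ} (ha : 0 ≤ a) (hb : 0 ≤ b) : (a + b) ^ 3 ≤ 4 * a ^ 3 + 4 * b ^ 3 := by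
  nlinarith [sq_nonneg (a - b), sq_nonneg (a + b), mul_nonneg ha hb, sq_nonneg a, sq_nonneg b,
    mul_nonneg (mul_nonneg ha ha) hb, mul_nonneg (mul_nonneg hb hb) ha]

lemma hc_seg_bound {g g' : ℝ → ℝ} {a b M : ℝ}
    (h : ∀ x ∈ Set.uIcc a b, HasDerivAt g (g' x) x)
    (hb : ∀ x ∈ Set.uIcc a b, |g' x| ≤ M) : |g b - g a| ≤ M * |b - a| := by
  rcases le_total a b with hab | hab
  · rw [Set.uIcc_of_le hab] at h hb
    have := norm_image_sub_le_of_norm_deriv_le_segment'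
      (f := g) (f' := g') (a := a) (b := b)
      (fun x hx => (h x hx).hasDerivWithinAt)
      (fun x hx => hb x (Set.Ico_subset_Icc_self hx)) b (Set.right_mem_Icc.2 hab)
    calc |g b - g a| ≤ M * (b - a) := by simpa [Real.norm_eq_abs] using this
      _ = M * |b - a| := by rw [abs_of_nonneg (by linarith)]
  · rw [Set.uIcc_of_ge hab] at h hb
    have := norm_image_sub_le_of_norm_deriv_le_segment'
      (f := g) (f' := g') (a := b) (b := a)
      (fun x hx => (h x hx).hasDerivWithinAt)
      (fun x hx => hb x (Set.Ico_subset_Icc_self hx)) a (Set.right_mem_Icc.2 hab)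
    calc |g b - g a| = |g a - g b| := abs_sub_comm _ _
      _ ≤ M * (a - b) := by simpa [Real.norm_eq_abs] using this
      _ = M * |b - a| := by rw [abs_sub_comm, abs_of_nonneg (by linarith)]

lemma hc_pow3 (v α : ℝ) : |v| ^ (3 * α) = (|v| ^ 3) ^ α := by
  rw [← Real.rpow_natCast |v| 3, ← Real.rpow_mul (abs_nonneg v)]
  norm_num

set_option maxHeartbeats 1000000 in
/-- Anisotropic Hölder continuity near the singular point `(0,0)`: a power-law
amplitude bound plus weighted gradient bounds imply
`|f(x₁,v₁) - f(x₂,v₂)| ≤ C'(|x₁-x₂|^α + |v₁-v₂|^{3α})` near `(0,0)`. -/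
theorem stmt_19 (α δ₀ C : ℝ) (hα0 : 0 < α) (hα : α < 1/6) (hδ₀ : 0 < δ₀) (hC : 0 < C)
    (f fx fv : ℝ → ℝ → ℝ)
    (hnn : ∀ x v : ℝ, 0 ≤ x → x ≤ 1 → 0 ≤ f x v)
    (hf00 : f 0 0 = 0)
    (hamp : ∀ x v : ℝ, 0 ≤ x → x ≤ 1 → |x| + |v| ^ 3 ≤ δ₀ ^ 3 →
      f x v ≤ C * (|x| ^ α + |v| ^ (3 * α)))
    (hderx : ∀ x v : ℝ, 0 ≤ x → x ≤ 1 → 0 < |x| + |v| ^ 3 → |x| + |v| ^ 3 ≤ δ₀ ^ 3 →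
      HasDerivAt (fun x' => f x' v) (fx x v) x)
    (hderv : ∀ x v : ℝ, 0 ≤ x → x ≤ 1 → 0 < |x| + |v| ^ 3 → |x| + |v| ^ 3 ≤ δ₀ ^ 3 →
      HasDerivAt (fun v' => f x v') (fv x v) v)
    (hgrad : ∀ x v : ℝ, 0 ≤ x → x ≤ 1 → 0 < |x| + |v| ^ 3 → |x| + |v| ^ 3 ≤ δ₀ ^ 3 →
      (|x| + |v| ^ 3) * |fx x v| + (|x| + |v| ^ 3) ^ ((1:ℝ)/3) * |fv x v| ≤
        C * (|x| + |v| ^ 3) ^ α) :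
    ∃ C' : ℝ, 0 < C' ∧ ∀ x₁ v₁ x₂ v₂ : ℝ,
      0 ≤ x₁ → x₁ ≤ 1 → 0 ≤ x₂ → x₂ ≤ 1 →
      |x₁| + |v₁| ^ 3 ≤ δ₀ ^ 3 → |x₂| + |v₂| ^ 3 ≤ δ₀ ^ 3 →
      |f x₁ v₁ - f x₂ v₂| ≤ C' * (|x₁ - x₂| ^ α + |v₁ - v₂| ^ (3 * α)) := by
  refine ⟨400 * C, by positivity, ?_⟩
  intro x₁ v₁ x₂ v₂ hx₁0 hx₁1 hx₂0 hx₂1 hρ₁δ hρ₂δ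
  rw [abs_of_nonneg hx₁0] at hρ₁δ
  rw [abs_of_nonneg hx₂0] at hρ₂δ
  set Δx := |x₁ - x₂| with hΔx_def
  set Δv := |v₁ - v₂| with hΔv_def
  have hΔx0 : 0 ≤ Δx := abs_nonneg _
  have hΔv0 : 0 ≤ Δv := abs_nonneg _
  set D := Δx + Δv ^ 3 with hD_def
  have hD0 : 0 ≤ D := by positivity
  set ρ₁ := x₁ + |v₁| ^ 3 with hρ₁_def
  set ρ₂ := x₂ + |v₂| ^ 3 with hρ₂_def
  have hρ₁0 : 0 ≤ ρ₁ := by positivity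
  have hρ₂0 : 0 ≤ ρ₂ := by positivity
  set M := max ρ₁ ρ₂ with hM_def
  have hM0 : 0 ≤ M := le_trans hρ₁0 (le_max_left _ _)
  have hE0 : 0 ≤ Δx ^ α + Δv ^ (3 * α) :=
    add_nonneg (Real.rpow_nonneg hΔx0 _) (Real.rpow_nonneg hΔv0 _)
  by_cases hDpos : 0 < D
  swap
  · -- D = 0 : the two points coincide
    have hDle : D ≤ 0 := not_lt.1 hDpos
    simp only [hD_def] at hDle
    have hΔx : Δx = 0 := le_antisymm (by linarith [pow_nonneg hΔv0 3]) hΔx0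
    have hΔv : Δv = 0 := by
      have h3 : Δv ^ 3 = 0 := le_antisymm (by linarith) (by positivity)
      exact pow_eq_zero_iff (by norm_num : (3:ℕ) ≠ 0) |>.1 h3
    have hx : x₁ = x₂ := by have := abs_eq_zero.1 hΔx; linarith
    have hv : v₁ = v₂ := by have := abs_eq_zero.1 hΔv; linarith
    rw [hx, hv, sub_self, abs_zero]
    exact mul_nonneg (by positivity) hE0
  by_cases hcase : M ≤ 100 * D
  · -- Case A : amplitude bound
    have h1 := hamp x₁ v₁ hx₁0 hx₁1 (by rwa [abs_of_nonneg hx₁0])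
    have h2 := hamp x₂ v₂ hx₂0 hx₂1 (by rwa [abs_of_nonneg hx₂0])
    rw [abs_of_nonneg hx₁0] at h1
    rw [abs_of_nonneg hx₂0] at h2
    have hMα : M ^ α ≤ 100 * (Δx ^ α + Δv ^ (3 * α)) := by
      have e1 : M ^ α ≤ (100 * D) ^ α := Real.rpow_le_rpow hM0 hcase hα0.le
      have e2 : (100 * D) ^ α = 100 ^ α * D ^ α := Real.mul_rpow (by norm_num) hD0
      have e3 : (100 : ℝ) ^ α ≤ 100 := by
        calc (100 : ℝ) ^ α ≤ 100 ^ (1 : ℝ) :=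
              Real.rpow_le_rpow_of_exponent_le (by norm_num) (by linarith)
          _ = 100 := Real.rpow_one _
      have e4 : D ^ α ≤ Δx ^ α + Δv ^ (3 * α) := by
        rw [hc_pow3 (v₁ - v₂) α]
        exact hc_rpow_add_le Δx (Δv ^ 3) α hΔx0 (by positivity) hα0.le (by linarith)
      have hDα0 : 0 ≤ D ^ α := Real.rpow_nonneg hD0 _
      calc M ^ α ≤ 100 ^ α * D ^ α := by rw [← e2]; exact e1
        _ ≤ 100 * D ^ α := mul_le_mul_of_nonneg_right e3 hDα0
        _ ≤ 100 * (Δx ^ α + Δv ^ (3 * α)) := by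
            have := mul_le_mul_of_nonneg_left e4 (by norm_num : (0:ℝ) ≤ 100)
            linarith
    have hb1 : f x₁ v₁ ≤ 2 * C * M ^ α := by
      have e1 : x₁ ^ α ≤ M ^ α := by
        refine Real.rpow_le_rpow hx₁0 ?_ hα0.le
        have : ρ₁ ≤ M := le_max_left _ _
        have : (0:ℝ) ≤ |v₁| ^ 3 := by positivity
        linarith [le_max_left ρ₁ ρ₂]
      have e2 : |v₁| ^ (3 * α) ≤ M ^ α := by
        rw [hc_pow3 v₁ α]
        refine Real.rpow_le_rpow (by positivity) ?_ hα0.le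
        linarith [le_max_left ρ₁ ρ₂]
      calc f x₁ v₁ ≤ C * (x₁ ^ α + |v₁| ^ (3 * α)) := h1
        _ ≤ C * (M ^ α + M ^ α) := mul_le_mul_of_nonneg_left (add_le_add e1 e2) hC.le
        _ = 2 * C * M ^ α := by ring
    have hb2 : f x₂ v₂ ≤ 2 * C * M ^ α := by
      have e1 : x₂ ^ α ≤ M ^ α := by
        refine Real.rpow_le_rpow hx₂0 ?_ hα0.le
        have : (0:ℝ) ≤ |v₂| ^ 3 := by positivity
        linarith [le_max_right ρ₁ ρ₂]
      have e2 : |v₂| ^ (3 * α) ≤ M ^ α := by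
        rw [hc_pow3 v₂ α]
        refine Real.rpow_le_rpow (by positivity) ?_ hα0.le
        linarith [le_max_right ρ₁ ρ₂]
      calc f x₂ v₂ ≤ C * (x₂ ^ α + |v₂| ^ (3 * α)) := h2
        _ ≤ C * (M ^ α + M ^ α) := mul_le_mul_of_nonneg_left (add_le_add e1 e2) hC.le
        _ = 2 * C * M ^ α := by ring
    have hnn1 := hnn x₁ v₁ hx₁0 hx₁1
    have hnn2 := hnn x₂ v₂ hx₂0 hx₂1
    have habs : |f x₁ v₁ - f x₂ v₂| ≤ f x₁ v₁ + f x₂ v₂ := by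
      rw [abs_sub_le_iff]; constructor <;> linarith only [hnn1, hnn2]
    calc |f x₁ v₁ - f x₂ v₂| ≤ f x₁ v₁ + f x₂ v₂ := habs
      _ ≤ 4 * C * M ^ α := by linarith only [hb1, hb2]
      _ ≤ 4 * C * (100 * (Δx ^ α + Δv ^ (3 * α))) :=
          mul_le_mul_of_nonneg_left hMα (by positivity)
      _ = 400 * C * (Δx ^ α + Δv ^ (3 * α)) := by ring
  · -- Case B : derivative (mean value) bound
    push_neg at hcase
    have hMpos : 0 < M := lt_trans (by positivity) hcase
    -- comparability of ρ₁, ρ₂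
    have hx21 : x₂ ≤ x₁ + Δx := by
      have := neg_abs_le (x₁ - x₂); simp only [hΔx_def]; linarith
    have hx12 : x₁ ≤ x₂ + Δx := by
      have := le_abs_self (x₁ - x₂); simp only [hΔx_def]; linarith
    have hv21 : |v₂| ^ 3 ≤ 4 * |v₁| ^ 3 + 4 * Δv ^ 3 := by
      have h1 : |v₂| ≤ |v₁| + Δv := by
        have := abs_sub_abs_le_abs_sub v₂ v₁
        rw [abs_sub_comm] at this; linarith
      calc |v₂| ^ 3 ≤ (|v₁| + Δv) ^ 3 := pow_le_pow_left₀ (abs_nonneg _) h1 3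
        _ ≤ 4 * |v₁| ^ 3 + 4 * Δv ^ 3 := hc_cube4 (abs_nonneg _) hΔv0
    have hv12 : |v₁| ^ 3 ≤ 4 * |v₂| ^ 3 + 4 * Δv ^ 3 := by
      have h1 : |v₁| ≤ |v₂| + Δv := by
        have := abs_sub_abs_le_abs_sub v₁ v₂; linarith
      calc |v₁| ^ 3 ≤ (|v₂| + Δv) ^ 3 := pow_le_pow_left₀ (abs_nonneg _) h1 3
        _ ≤ 4 * |v₂| ^ 3 + 4 * Δv ^ 3 := hc_cube4 (abs_nonneg _) hΔv0
    have hM1 : M ≤ 4 * ρ₁ + 4 * D := by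
      refine max_le (by linarith only [hρ₁0, hD0]) ?_
      simp only [hρ₁_def, hρ₂_def, hD_def]
      linarith only [hx21, hv21, hx₁0, hΔx0, pow_nonneg hΔv0 3]
    have hM2 : M ≤ 4 * ρ₂ + 4 * D := by
      refine max_le ?_ (by linarith only [hρ₂0, hD0])
      simp only [hρ₁_def, hρ₂_def, hD_def]
      linarith only [hx12, hv12, hx₂0, hΔx0, pow_nonneg hΔv0 3]
    set K := M / 20 with hK_def
    have hK : 0 < K := by positivity
    -- lower bound on ρ along the path
    have hlow : ∀ x ∈ Set.uIcc x₁ x₂, ∀ v ∈ Set.uIcc v₁ v₂, K ≤ x + |v| ^ 3 := by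
      intro x hx v hv
      have h1 : x₁ - Δx ≤ x := by
        have h := hc_uIcc_abs_sub_le hx
        rw [abs_sub_comm x₂ x₁] at h
        have := neg_abs_le (x - x₁)
        simp only [hΔx_def]; linarith
      have h2 : |v₁| ≤ |v| + Δv := by
        have h := hc_uIcc_abs_sub_le hv
        rw [abs_sub_comm v₂ v₁] at h
        have := abs_sub_abs_le_abs_sub v₁ v
        rw [abs_sub_comm v₁ v] at this
        simp only [hΔv_def]; linarith
      have h3 : |v₁| ^ 3 ≤ 4 * |v| ^ 3 + 4 * Δv ^ 3 :=
        (pow_le_pow_left₀ (abs_nonneg _) h2 3).trans (hc_cube4 (abs_nonneg _) hΔv0)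
      simp only [hK_def, hρ₁_def, hD_def] at hM1 hcase ⊢
      linarith only [h1, h3, hM1, hcase, hx₁0, hΔx0, pow_nonneg hΔv0 3]
    -- the intermediate x's stay in [0,1]
    have hx01 : ∀ x ∈ Set.uIcc x₁ x₂, 0 ≤ x ∧ x ≤ 1 := by
      intro x hx
      rcases Set.mem_uIcc.1 hx with h | h <;> exact ⟨by linarith [h.1], by linarith [h.2]⟩
    -- pointwise derivative bounds
    have hfxb : ∀ x v : ℝ, 0 ≤ x → x ≤ 1 → K ≤ x + |v| ^ 3 → x + |v| ^ 3 ≤ δ₀ ^ 3 →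
        |fx x v| ≤ C * K ^ (α - 1) := by
      intro x v h0 h1 hKρ hρδ
      have hρpos : 0 < x + |v| ^ 3 := lt_of_lt_of_le hK hKρ
      have hg := hgrad x v h0 h1 (by rwa [abs_of_nonneg h0]) (by rwa [abs_of_nonneg h0])
      rw [abs_of_nonneg h0] at hg
      have hfv0 : 0 ≤ (x + |v| ^ 3) ^ ((1:ℝ)/3) * |fv x v| :=
        mul_nonneg (Real.rpow_nonneg hρpos.le _) (abs_nonneg _)
      have h2 : (x + |v| ^ 3) * |fx x v| ≤ C * (x + |v| ^ 3) ^ α := by linarith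
      have h3 : |fx x v| ≤ C * (x + |v| ^ 3) ^ (α - 1) := by
        rw [Real.rpow_sub hρpos, Real.rpow_one, mul_div_assoc', le_div_iff₀ hρpos]
        linarith
      refine h3.trans (mul_le_mul_of_nonneg_left ?_ hC.le)
      exact Real.rpow_le_rpow_of_nonpos hK hKρ (by linarith)
    have hfvb : ∀ x v : ℝ, 0 ≤ x → x ≤ 1 → K ≤ x + |v| ^ 3 → x + |v| ^ 3 ≤ δ₀ ^ 3 →
        |fv x v| ≤ C * K ^ (α - 1/3) := by
      intro x v h0 h1 hKρ hρδ
      have hρpos : 0 < x + |v| ^ 3 := lt_of_lt_of_le hK hKρ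
      have hg := hgrad x v h0 h1 (by rwa [abs_of_nonneg h0]) (by rwa [abs_of_nonneg h0])
      rw [abs_of_nonneg h0] at hg
      have hfx0 : 0 ≤ (x + |v| ^ 3) * |fx x v| := mul_nonneg hρpos.le (abs_nonneg _)
      have hρ13 : 0 < (x + |v| ^ 3) ^ ((1:ℝ)/3) := Real.rpow_pos_of_pos hρpos _
      have h2 : (x + |v| ^ 3) ^ ((1:ℝ)/3) * |fv x v| ≤ C * (x + |v| ^ 3) ^ α := by linarith
      have h3 : |fv x v| ≤ C * (x + |v| ^ 3) ^ (α - 1/3) := by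
        rw [Real.rpow_sub hρpos, mul_div_assoc', le_div_iff₀ hρ13]
        linarith
      refine h3.trans (mul_le_mul_of_nonneg_left ?_ hC.le)
      exact Real.rpow_le_rpow_of_nonpos hK hKρ (by linarith)
    -- segment estimates
    have segx : ∀ v ∈ Set.uIcc v₁ v₂, ∀ a b : ℝ, a ∈ Set.uIcc x₁ x₂ → b ∈ Set.uIcc x₁ x₂ →
        (∀ x ∈ Set.uIcc a b, x + |v| ^ 3 ≤ δ₀ ^ 3) →
        |f b v - f a v| ≤ C * K ^ (α - 1) * |b - a| := by
      intro v hv a b ha hb hup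
      have hsub : Set.uIcc a b ⊆ Set.uIcc x₁ x₂ := Set.uIcc_subset_uIcc ha hb
      refine hc_seg_bound (g := fun x' => f x' v) (g' := fun x => fx x v) ?_ ?_
      · intro x hx
        obtain ⟨h0, h1⟩ := hx01 x (hsub hx)
        have hKρ := hlow x (hsub hx) v hv
        exact hderx x v h0 h1 (by rw [abs_of_nonneg h0]; linarith)
          (by rw [abs_of_nonneg h0]; exact hup x hx)
      · intro x hx
        obtain ⟨h0, h1⟩ := hx01 x (hsub hx)
        exact hfxb x v h0 h1 (hlow x (hsub hx) v hv) (hup x hx)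
    have segv : ∀ x ∈ Set.uIcc x₁ x₂, ∀ a b : ℝ, a ∈ Set.uIcc v₁ v₂ → b ∈ Set.uIcc v₁ v₂ →
        (∀ v ∈ Set.uIcc a b, x + |v| ^ 3 ≤ δ₀ ^ 3) →
        |f x b - f x a| ≤ C * K ^ (α - 1/3) * |b - a| := by
      intro x hx a b ha hb hup
      obtain ⟨h0, h1⟩ := hx01 x hx
      have hsub : Set.uIcc a b ⊆ Set.uIcc v₁ v₂ := Set.uIcc_subset_uIcc ha hb
      refine hc_seg_bound (g := fun v' => f x v') (g' := fun v => fv x v) ?_ ?_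
      · intro v hv
        have hKρ := hlow x hx v (hsub hv)
        exact hderv x v h0 h1 (by rw [abs_of_nonneg h0]; linarith)
          (by rw [abs_of_nonneg h0]; exact hup v hv)
      · intro v hv
        exact hfvb x v h0 h1 (hlow x hx v (hsub hv)) (hup v hv)
    -- the corner points
    set xm := min x₁ x₂ with hxm_def
    have hxm1 : xm ≤ x₁ := min_le_left _ _
    have hxm2 : xm ≤ x₂ := min_le_right _ _
    have hxm_mem : xm ∈ Set.uIcc x₁ x₂ := by
      rcases min_cases x₁ x₂ with ⟨h, _⟩ | ⟨h, _⟩ <;> rw [hxm_def, h]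
      · exact Set.left_mem_uIcc
      · exact Set.right_mem_uIcc
    obtain ⟨vm, hvm_mem, hvm1, hvm2, hvm_sum⟩ :
        ∃ vm, vm ∈ Set.uIcc v₁ v₂ ∧ |vm| ≤ |v₁| ∧ |vm| ≤ |v₂| ∧
          |vm - v₁| + |v₂ - vm| = Δv := by
      rcases le_total |v₁| |v₂| with h | h
      · refine ⟨v₁, Set.left_mem_uIcc, le_refl _, h, ?_⟩
        simp only [sub_self, abs_zero, zero_add, hΔv_def]
        exact abs_sub_comm v₂ v₁
      · refine ⟨v₂, Set.right_mem_uIcc, h, le_refl _, ?_⟩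
        simp only [sub_self, abs_zero, add_zero, hΔv_def]
        exact abs_sub_comm v₂ v₁
    have hxm_sum : |xm - x₁| + |x₂ - xm| = Δx := by
      rcases min_cases x₁ x₂ with ⟨h, h'⟩ | ⟨h, h'⟩ <;> rw [hxm_def, h]
      · simp only [sub_self, abs_zero, zero_add, hΔx_def]
        exact abs_sub_comm x₂ x₁
      · simp only [sub_self, abs_zero, add_zero, hΔx_def]
        exact abs_sub_comm x₂ x₁
    -- the four segment estimates
    have S1 : |f xm v₁ - f x₁ v₁| ≤ C * K ^ (α - 1) * |xm - x₁| := by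
      refine segx v₁ Set.left_mem_uIcc x₁ xm Set.left_mem_uIcc hxm_mem ?_
      intro x hx
      rcases Set.mem_uIcc.1 hx with h | h
      · simp only [hρ₁_def] at hρ₁δ; linarith [h.2]
      · simp only [hρ₁_def] at hρ₁δ; linarith [h.2]
    have S2 : |f xm vm - f xm v₁| ≤ C * K ^ (α - 1/3) * |vm - v₁| := by
      refine segv xm hxm_mem v₁ vm Set.left_mem_uIcc hvm_mem ?_
      intro v hv
      have h1 : |v| ≤ |v₁| := by
        have := hc_uIcc_abs_le hv
        exact this.trans (max_le (le_refl _) hvm1)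
      have h2 : |v| ^ 3 ≤ |v₁| ^ 3 := pow_le_pow_left₀ (abs_nonneg _) h1 3
      simp only [hρ₁_def] at hρ₁δ; linarith
    have S3 : |f x₂ vm - f xm vm| ≤ C * K ^ (α - 1) * |x₂ - xm| := by
      refine segx vm hvm_mem xm x₂ hxm_mem Set.right_mem_uIcc ?_
      intro x hx
      have h2 : |vm| ^ 3 ≤ |v₂| ^ 3 := pow_le_pow_left₀ (abs_nonneg _) hvm2 3
      rcases Set.mem_uIcc.1 hx with h | h
      · simp only [hρ₂_def] at hρ₂δ; linarith [h.2]
      · simp only [hρ₂_def] at hρ₂δ; linarith [h.1]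
    have S4 : |f x₂ v₂ - f x₂ vm| ≤ C * K ^ (α - 1/3) * |v₂ - vm| := by
      refine segv x₂ Set.right_mem_uIcc vm v₂ hvm_mem Set.right_mem_uIcc ?_
      intro v hv
      have h1 : |v| ≤ |v₂| := by
        have := hc_uIcc_abs_le hv
        exact this.trans (max_le hvm2 (le_refl _))
      have h2 : |v| ^ 3 ≤ |v₂| ^ 3 := pow_le_pow_left₀ (abs_nonneg _) h1 3
      simp only [hρ₂_def] at hρ₂δ; linarith
    -- assemble
    have hKα1 : 0 ≤ K ^ (α - 1) := Real.rpow_nonneg hK.le _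
    have hKα13 : 0 ≤ K ^ (α - 1/3) := Real.rpow_nonneg hK.le _
    have e : f x₂ v₂ - f x₁ v₁ =
        (f xm v₁ - f x₁ v₁) + (f xm vm - f xm v₁) + (f x₂ vm - f xm vm) +
          (f x₂ v₂ - f x₂ vm) := by ring
    have htri : |f x₁ v₁ - f x₂ v₂| ≤
        |f xm v₁ - f x₁ v₁| + |f xm vm - f xm v₁| + |f x₂ vm - f xm vm| +
          |f x₂ v₂ - f x₂ vm| := by
      rw [abs_sub_comm, e]
      have t1 := abs_add_le (f xm v₁ - f x₁ v₁) (f xm vm - f xm v₁)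
      have t2 := abs_add_le (f xm v₁ - f x₁ v₁ + (f xm vm - f xm v₁)) (f x₂ vm - f xm vm)
      have t3 := abs_add_le (f xm v₁ - f x₁ v₁ + (f xm vm - f xm v₁) + (f x₂ vm - f xm vm))
        (f x₂ v₂ - f x₂ vm)
      linarith only [t1, t2, t3]
    have hx' : C * K ^ (α - 1) * |xm - x₁| + C * K ^ (α - 1) * |x₂ - xm| =
        C * K ^ (α - 1) * Δx := by rw [← mul_add, hxm_sum]
    have hv' : C * K ^ (α - 1/3) * |vm - v₁| + C * K ^ (α - 1/3) * |v₂ - vm| =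
        C * K ^ (α - 1/3) * Δv := by rw [← mul_add, hvm_sum]
    have hsum : |f x₁ v₁ - f x₂ v₂| ≤
        C * K ^ (α - 1) * Δx + C * K ^ (α - 1/3) * Δv := by
      linarith only [S1, S2, S3, S4, htri, hx', hv']
    have hDK : D ≤ K := by
      simp only [hK_def]
      linarith only [hcase, hD0, hD_def]
    have hxK : Δx ≤ K := by
      simp only [hD_def] at hDK
      linarith [pow_nonneg hΔv0 3]
    have hv3K : Δv ^ 3 ≤ K := by
      simp only [hD_def] at hDK
      linarith
    have hA : C * K ^ (α - 1) * Δx ≤ C * Δx ^ α := by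
      by_cases h0 : Δx = 0
      · rw [h0, mul_zero]
        exact mul_nonneg hC.le (Real.rpow_nonneg (le_refl 0) _)
      · have hxpos : 0 < Δx := lt_of_le_of_ne hΔx0 (Ne.symm h0)
        have e1 : Δx ^ (1 - α) ≤ K ^ (1 - α) :=
          Real.rpow_le_rpow hΔx0 hxK (by linarith)
        have e2 : Δx = Δx ^ α * Δx ^ (1 - α) := by
          rw [← Real.rpow_add hxpos, show α + (1 - α) = 1 by ring, Real.rpow_one]
        have e3 : K ^ (α - 1) * K ^ (1 - α) = 1 := by
          rw [← Real.rpow_add hK, show α - 1 + (1 - α) = 0 by ring, Real.rpow_zero]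
        have key : K ^ (α - 1) * Δx ≤ Δx ^ α := by
          calc K ^ (α - 1) * Δx = K ^ (α - 1) * (Δx ^ α * Δx ^ (1 - α)) := by rw [← e2]
            _ ≤ K ^ (α - 1) * (Δx ^ α * K ^ (1 - α)) := by
                refine mul_le_mul_of_nonneg_left ?_ hKα1
                exact mul_le_mul_of_nonneg_left e1 (Real.rpow_nonneg hΔx0 _)
            _ = Δx ^ α * (K ^ (α - 1) * K ^ (1 - α)) := by ring
            _ = Δx ^ α := by rw [e3, mul_one]
        calc C * K ^ (α - 1) * Δx = C * (K ^ (α - 1) * Δx) := by ring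
          _ ≤ C * Δx ^ α := mul_le_mul_of_nonneg_left key hC.le
    have hB : C * K ^ (α - 1/3) * Δv ≤ C * Δv ^ (3 * α) := by
      by_cases h0 : Δv = 0
      · rw [h0, mul_zero]
        exact mul_nonneg hC.le (Real.rpow_nonneg (le_refl 0) _)
      · have hvpos : 0 < Δv := lt_of_le_of_ne hΔv0 (Ne.symm h0)
        have hΔvK : Δv ≤ K ^ ((1:ℝ)/3) := by
          have h1 : ((Δv ^ 3 : ℝ)) ^ ((1:ℝ)/3) ≤ K ^ ((1:ℝ)/3) :=
            Real.rpow_le_rpow (by positivity) hv3K (by norm_num)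
          have h2 : ((Δv ^ 3 : ℝ)) ^ ((1:ℝ)/3) = Δv := by
            rw [← Real.rpow_natCast Δv 3, ← Real.rpow_mul hΔv0]
            norm_num
          linarith
        have e1 : Δv ^ (1 - 3 * α) ≤ K ^ ((1:ℝ)/3 * (1 - 3 * α)) := by
          rw [Real.rpow_mul hK.le]
          exact Real.rpow_le_rpow hΔv0 hΔvK (by linarith)
        have e2 : Δv = Δv ^ (3 * α) * Δv ^ (1 - 3 * α) := by
          rw [← Real.rpow_add hvpos, show 3 * α + (1 - 3 * α) = 1 by ring, Real.rpow_one]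
        have e3 : K ^ (α - 1/3) * K ^ ((1:ℝ)/3 * (1 - 3 * α)) = 1 := by
          rw [← Real.rpow_add hK, show α - 1/3 + (1:ℝ)/3 * (1 - 3 * α) = 0 by ring,
            Real.rpow_zero]
        have key : K ^ (α - 1/3) * Δv ≤ Δv ^ (3 * α) := by
          calc K ^ (α - 1/3) * Δv
              = K ^ (α - 1/3) * (Δv ^ (3 * α) * Δv ^ (1 - 3 * α)) := by rw [← e2]
            _ ≤ K ^ (α - 1/3) * (Δv ^ (3 * α) * K ^ ((1:ℝ)/3 * (1 - 3 * α))) := by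
                refine mul_le_mul_of_nonneg_left ?_ hKα13
                exact mul_le_mul_of_nonneg_left e1 (Real.rpow_nonneg hΔv0 _)
            _ = Δv ^ (3 * α) * (K ^ (α - 1/3) * K ^ ((1:ℝ)/3 * (1 - 3 * α))) := by ring
            _ = Δv ^ (3 * α) := by rw [e3, mul_one]
        calc C * K ^ (α - 1/3) * Δv = C * (K ^ (α - 1/3) * Δv) := by ring
          _ ≤ C * Δv ^ (3 * α) := mul_le_mul_of_nonneg_left key hC.le
    calc |f x₁ v₁ - f x₂ v₂| ≤ C * K ^ (α - 1) * Δx + C * K ^ (α - 1/3) * Δv := hsum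
      _ ≤ C * Δx ^ α + C * Δv ^ (3 * α) := add_le_add hA hB
      _ ≤ 400 * C * (Δx ^ α + Δv ^ (3 * α)) := by
          linarith only [mul_nonneg hC.le hE0]
end
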